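/- arXiv:2103.16401 — 2 statements merged into one kernel-verified Lean document; each statement's English description precedes it below -/
import Mathlib

section
/- For every positive integer n and every s > 0 there is a positive constant c(n,s) such that c(n,s) ℋ^{s+1}(A) ≤ ℋ^s_E(A) ≤ ℋ^s(A) for every set A ⊂ 𝒫ⁿ. -/
open MeasureTheory Metric Set Filter
open scoped ENNReal NNReal Topology

noncomputable section

/-- Euclidean `ℝ^(n+1)`, realized as the `L²`-product `ℝⁿ × ℝ`. -/
abbrev EucP (n : ℕ) : Type := WithLp 2 (EuclideanSpace ℝ (Fin n) × ℝ)

instance (n : ℕ) : MeasurableSpace (EucP n) := borel _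
instance (n : ℕ) : BorelSpace (EucP n) := ⟨rfl⟩

/-- The parabolic space `𝒫ⁿ = ℝⁿ × ℝ`, a type synonym of `ℝⁿ × ℝ` carrying the
parabolic metric `d(p,q) = ‖p - q‖` with `‖(x,t)‖ = √(|x|² + |t|)`. -/
def Para (n : ℕ) : Type := EuclideanSpace ℝ (Fin n) × ℝ

namespace Para

variable {n : ℕ}

instance : AddCommGroup (Para n) :=
  inferInstanceAs (AddCommGroup (EuclideanSpace ℝ (Fin n) × ℝ))

instance : Module ℝ (Para n) :=
  inferInstanceAs (Module ℝ (EuclideanSpace ℝ (Fin n) × ℝ))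

/-- Build a point of `𝒫ⁿ` from a pair `(x, t)`. -/
def ofProd (p : EuclideanSpace ℝ (Fin n) × ℝ) : Para n := p

/-- The spatial (horizontal) component `x` of `p = (x,t)`. -/
def x (p : Para n) : EuclideanSpace ℝ (Fin n) :=
  (show EuclideanSpace ℝ (Fin n) × ℝ from p).1

/-- The time (vertical) component `t` of `p = (x,t)`. -/
def t (p : Para n) : ℝ := (show EuclideanSpace ℝ (Fin n) × ℝ from p).2

lemma ext' {p q : Para n} (h1 : p.x = q.x) (h2 : p.t = q.t) : p = q := by
  have : (show EuclideanSpace ℝ (Fin n) × ℝ from p)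
      = (show EuclideanSpace ℝ (Fin n) × ℝ from q) := Prod.ext h1 h2
  exact this

lemma x_sub (p q : Para n) : (p - q).x = p.x - q.x := rfl
lemma t_sub (p q : Para n) : (p - q).t = p.t - q.t := rfl
lemma x_add (p q : Para n) : (p + q).x = p.x + q.x := rfl
lemma t_add (p q : Para n) : (p + q).t = p.t + q.t := rfl
lemma x_zero : (0 : Para n).x = 0 := rfl
lemma t_zero : (0 : Para n).t = 0 := rfl

/-- The parabolic norm `‖(x,t)‖ = √(|x|² + |t|)`. -/
def pnorm (p : Para n) : ℝ := Real.sqrt (‖p.x‖ ^ 2 + |p.t|)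

lemma pnorm_zero : pnorm (0 : Para n) = 0 := by
  simp [pnorm, x_zero, t_zero]

lemma pnorm_neg (p : Para n) : pnorm (-p) = pnorm p := by
  have hx : (-p).x = -p.x := rfl
  have ht : (-p).t = -p.t := rfl
  simp [pnorm, hx, ht]

lemma pnorm_add_le (p q : Para n) : pnorm (p + q) ≤ pnorm p + pnorm q := by
  have hx : ‖(p + q).x‖ ≤ ‖p.x‖ + ‖q.x‖ := by rw [x_add]; exact norm_add_le _ _
  have ht : |(p + q).t| ≤ |p.t| + |q.t| := by rw [t_add]; exact abs_add_le _ _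
  have hB : (0:ℝ) ≤ ‖p.x‖ ^ 2 + |p.t| := by positivity
  have hC : (0:ℝ) ≤ ‖q.x‖ ^ 2 + |q.t| := by positivity
  have h1 : ‖p.x‖ ≤ Real.sqrt (‖p.x‖ ^ 2 + |p.t|) :=
    (Real.le_sqrt (norm_nonneg _) hB).mpr (le_add_of_nonneg_right (abs_nonneg _))
  have h2 : ‖q.x‖ ≤ Real.sqrt (‖q.x‖ ^ 2 + |q.t|) :=
    (Real.le_sqrt (norm_nonneg _) hC).mpr (le_add_of_nonneg_right (abs_nonneg _))
  have e1 : Real.sqrt (‖p.x‖ ^ 2 + |p.t|) ^ 2 = ‖p.x‖ ^ 2 + |p.t| := Real.sq_sqrt hB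
  have e2 : Real.sqrt (‖q.x‖ ^ 2 + |q.t|) ^ 2 = ‖q.x‖ ^ 2 + |q.t| := Real.sq_sqrt hC
  have hmul : ‖p.x‖ * ‖q.x‖ ≤
      Real.sqrt (‖p.x‖ ^ 2 + |p.t|) * Real.sqrt (‖q.x‖ ^ 2 + |q.t|) :=
    mul_le_mul h1 h2 (norm_nonneg _) (Real.sqrt_nonneg _)
  unfold pnorm
  rw [show Real.sqrt (‖p.x‖ ^ 2 + |p.t|) + Real.sqrt (‖q.x‖ ^ 2 + |q.t|)
      = Real.sqrt ((Real.sqrt (‖p.x‖ ^ 2 + |p.t|) + Real.sqrt (‖q.x‖ ^ 2 + |q.t|)) ^ 2) from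
      (Real.sqrt_sq (by positivity)).symm]
  apply Real.sqrt_le_sqrt
  have hxx : ‖(p + q).x‖ * ‖(p + q).x‖ ≤ (‖p.x‖ + ‖q.x‖) * (‖p.x‖ + ‖q.x‖) :=
    mul_le_mul hx hx (norm_nonneg _) (by positivity)
  nlinarith [norm_nonneg (p + q).x, abs_nonneg (p + q).t]

instance : MetricSpace (Para n) where
  dist p q := pnorm (p - q)
  dist_self p := by
    show pnorm (p - p) = 0
    rw [sub_self, pnorm_zero]
  dist_comm p q := by
    show pnorm (p - q) = pnorm (q - p)
    rw [← neg_sub q p, pnorm_neg]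
  dist_triangle p q r := by
    show pnorm (p - r) ≤ pnorm (p - q) + pnorm (q - r)
    have h := pnorm_add_le (p - q) (q - r)
    rwa [sub_add_sub_cancel] at h
  eq_of_dist_eq_zero := by
    intro p q h
    have h' : pnorm (p - q) = 0 := h
    have hB : (0:ℝ) ≤ ‖(p - q).x‖ ^ 2 + |(p - q).t| := by positivity
    have h0 : ‖(p - q).x‖ ^ 2 + |(p - q).t| = 0 := by
      have := (Real.sqrt_eq_zero hB).mp h'
      exact this
    have hx : ‖(p - q).x‖ ^ 2 = 0 := by nlinarith [sq_nonneg ‖(p - q).x‖, abs_nonneg (p - q).t]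
    have ht : |(p - q).t| = 0 := by nlinarith [sq_nonneg ‖(p - q).x‖, abs_nonneg (p - q).t]
    have hx' : (p - q).x = 0 := by
      have := pow_eq_zero_iff (n := 2) (by norm_num) |>.mp hx
      exact norm_eq_zero.mp this
    have ht' : (p - q).t = 0 := abs_eq_zero.mp ht
    have : p - q = 0 := ext' (by rw [hx']; rfl) (by rw [ht']; rfl)
    exact sub_eq_zero.mp this

lemma dist_def (p q : Para n) : dist p q = pnorm (p - q) := rfl

instance : MeasurableSpace (Para n) := borel (Para n)
instance : BorelSpace (Para n) := ⟨rfl⟩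

/-- The identity map from the parabolic space to Euclidean `ℝ^(n+1)`. -/
def toEuc (p : Para n) : EucP n := WithLp.toLp 2 p

/-- The identity map from Euclidean `ℝ^(n+1)` to the parabolic space. -/
def ofEuc (p : EucP n) : Para n := WithLp.ofLp p

/-- The identity, as a linear equivalence between the parabolic space and Euclidean
`ℝ^(n+1)`. -/
def eucEquiv : Para n ≃ₗ[ℝ] EucP n where
  toFun := toEuc
  invFun := ofEuc
  map_add' _ _ := rfl
  map_smul' _ _ := rfl
  left_inv _ := rfl
  right_inv _ := rfl

/-- The orthogonal complement (in Euclidean `ℝ^(n+1)`) of a subspace of `𝒫ⁿ`. -/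
def perp (V : Submodule ℝ (Para n)) : Submodule ℝ (Para n) :=
  Submodule.comap (eucEquiv (n := n)).toLinearMap
    ((Submodule.map (eucEquiv (n := n)).toLinearMap V)ᗮ)

/-- `H(n,m)`: the horizontal homogeneous subspaces, i.e. `m`-dimensional linear
subspaces of `ℝⁿ × {0}`. -/
def Horiz (n m : ℕ) : Set (Submodule ℝ (Para n)) :=
  {V | Module.finrank ℝ V = m ∧ ∀ p ∈ V, Para.t p = 0}

/-- `V(n,m)`: the vertical homogeneous subspaces, i.e. `(m-1)`-dimensional linear
subspaces of `ℝⁿ × ℝ` containing the `t`-axis `{0} × ℝ`. -/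
def Vert (n m : ℕ) : Set (Submodule ℝ (Para n)) :=
  {V | Module.finrank ℝ V = m - 1 ∧ ofProd (0, 1) ∈ V}

/-- `P(n,m) = H(n,m) ∪ V(n,m)`, the homogeneous subspaces of parabolic Hausdorff
dimension `m`. -/
def PSet (n m : ℕ) : Set (Submodule ℝ (Para n)) := Horiz n m ∪ Vert n m

/-- The parabolic cone `X(a,V,s) = {q : d(q - a, V) < s ‖q - a‖}`. -/
def cone (a : Para n) (V : Set (Para n)) (s : ℝ) : Set (Para n) :=
  {q | Metric.infDist (q - a) V < s * dist q a}

/-- `G` is an `(m,L)`-Lipschitz graph over `V ∈ P(n,m)`: there are `A ⊆ V` and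
`g : A → V^⊥` which is `L`-Lipschitz for the parabolic norm, with
`G = {p + g(p) : p ∈ A}`. -/
def IsLipGraphOver (n m : ℕ) (L : ℝ) (V : Submodule ℝ (Para n)) (G : Set (Para n)) : Prop :=
  V ∈ PSet n m ∧ ∃ (A : Set (Para n)) (g : Para n → Para n),
    A ⊆ (V : Set (Para n)) ∧ (∀ p ∈ A, g p ∈ perp V) ∧
    (∀ p ∈ A, ∀ q ∈ A, pnorm (g p - g q) ≤ L * pnorm (p - q)) ∧
    G = (fun p => p + g p) '' A

/-- `G` is an `(m,L)`-Lipschitz graph (over some `V ∈ P(n,m)`). -/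
def IsLipGraph (n m : ℕ) (L : ℝ) (G : Set (Para n)) : Prop :=
  ∃ V, IsLipGraphOver n m L V G

/-- `E` is `(m,L)`-rectifiable: `ℋ^m`-almost all of `E` is covered by countably many
`(m,L)`-Lipschitz graphs. -/
def MLRect (n m : ℕ) (L : ℝ) (E : Set (Para n)) : Prop :=
  ∃ G : ℕ → Set (Para n), (∀ i, IsLipGraph n m L (G i)) ∧
    μH[(m : ℝ)] (E \ ⋃ i, G i) = 0

/-- `E` is LG `m`-rectifiable: for every `L > 0`, `ℋ^m`-almost all of `E` is covered
by countably many `(m,L)`-Lipschitz graphs. -/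
def LGRect (n m : ℕ) (E : Set (Para n)) : Prop :=
  ∀ L : ℝ, 0 < L → MLRect n m L E


end Para

open Para

section Aux

namespace ParaHelpers

open Para

variable {n : ℕ}

lemma para_dist_eq (p q : Para n) :
    dist p q = Real.sqrt (‖p.x - q.x‖ ^ 2 + |p.t - q.t|) := rfl

lemma euc_dist_eq (p q : Para n) :
    dist (toEuc p) (toEuc q) = Real.sqrt (‖p.x - q.x‖ ^ 2 + |p.t - q.t| ^ 2) := by
  rw [WithLp.prod_dist_eq_of_L2]
  rw [show dist (toEuc p).fst (toEuc q).fst = ‖p.x - q.x‖ by rw [dist_eq_norm]; rfl,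
    show dist (toEuc p).snd (toEuc q).snd = |p.t - q.t| from Real.dist_eq _ _]

lemma norm_x_le_euc (p q : Para n) : ‖p.x - q.x‖ ≤ dist (toEuc p) (toEuc q) := by
  rw [euc_dist_eq]
  exact (Real.le_sqrt (norm_nonneg _) (by positivity)).mpr
    (le_add_of_nonneg_right (by positivity))

lemma abs_t_le_euc (p q : Para n) : |p.t - q.t| ≤ dist (toEuc p) (toEuc q) := by
  rw [euc_dist_eq]
  exact (Real.le_sqrt (abs_nonneg _) (by positivity)).mpr
    (by rw [sq_abs]; exact le_add_of_nonneg_left (by positivity))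

lemma abs_t_le_sq (p q : Para n) : |p.t - q.t| ≤ dist p q ^ 2 := by
  rw [para_dist_eq, Real.sq_sqrt (by positivity)]
  exact le_add_of_nonneg_left (by positivity)

lemma euc_dist_le (p q : Para n) (h : |p.t - q.t| ≤ 1) :
    dist (toEuc p) (toEuc q) ≤ dist p q := by
  rw [euc_dist_eq, para_dist_eq]
  apply Real.sqrt_le_sqrt
  have h2 : |p.t - q.t| ^ 2 ≤ |p.t - q.t| := by nlinarith [abs_nonneg (p.t - q.t)]
  linarith

lemma continuous_t : Continuous (Para.t : Para n → ℝ) := by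
  rw [Metric.continuous_iff]
  intro p ε hε
  refine ⟨Real.sqrt ε, Real.sqrt_pos.mpr hε, fun q hq => ?_⟩
  rw [Real.dist_eq]
  calc |q.t - p.t| ≤ dist q p ^ 2 := abs_t_le_sq q p
    _ < ε := by
        rw [← Real.sq_sqrt hε.le]
        exact pow_lt_pow_left₀ hq dist_nonneg (by norm_num)

end ParaHelpers

end Aux
namespace ParaHelpers

open Para

variable {n : ℕ}

lemma Icc_subset_iUnion_Icc (u L h : ℝ) (N : ℕ) (hN : 0 < N) (hh : 0 < h) (hL : L ≤ N * h) :
    Set.Icc u (u + L) ⊆ ⋃ k ∈ Finset.range N, Set.Icc (u + k * h) (u + (k + 1) * h) := by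
  rintro y ⟨hy1, hy2⟩
  set z := (y - u) / h with hz
  have hz0 : 0 ≤ z := div_nonneg (by linarith) hh.le
  set j := ⌊z⌋.toNat with hj
  have hcast : ((j : ℤ) : ℝ) = ((⌊z⌋ : ℤ) : ℝ) := by
    exact_mod_cast congrArg (fun m : ℤ => (m : ℝ)) (Int.toNat_of_nonneg (Int.floor_nonneg.mpr hz0))
  have hjz : (j : ℝ) ≤ z := by
    have := Int.floor_le z
    calc (j : ℝ) = ((⌊z⌋ : ℤ) : ℝ) := by exact_mod_cast hcast
      _ ≤ z := this
  have hzj : z < (j : ℝ) + 1 := by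
    have := Int.lt_floor_add_one z
    calc z < ((⌊z⌋ : ℤ) : ℝ) + 1 := this
      _ = (j : ℝ) + 1 := by rw [← hcast]; norm_num
  set k := min j (N - 1) with hk
  have hkN : k < N := lt_of_le_of_lt (min_le_right _ _) (Nat.sub_lt hN one_pos)
  have hzh : z * h = y - u := div_mul_cancel₀ _ hh.ne'
  refine Set.mem_biUnion (Finset.mem_range.mpr hkN) ⟨?_, ?_⟩
  · have h1 : (k : ℝ) ≤ (j : ℝ) := by exact_mod_cast min_le_left j (N - 1)
    have h2 : (k : ℝ) * h ≤ z * h := mul_le_mul_of_nonneg_right (h1.trans hjz) hh.le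
    rw [hzh] at h2; linarith
  · rcases le_or_gt j (N - 1) with hcase | hcase
    · have hkj : k = j := min_eq_left hcase
      have h2 : z * h < ((j : ℝ) + 1) * h := mul_lt_mul_of_pos_right hzj hh
      rw [hzh] at h2
      rw [hkj]; linarith
    · have hkN1 : k = N - 1 := min_eq_right hcase.le
      have hc : ((k : ℕ) : ℝ) + 1 = (N : ℝ) := by
        rw [hkN1, Nat.cast_sub hN]; ring
      rw [hc]; linarith

lemma coverOne (s : ℝ) (hs : 0 < s) (S : Set (Para n)) (d : ℝ) (hd : 0 < d) (hd1 : d ≤ 1)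
    (hS : ∀ p ∈ S, ∀ q ∈ S, dist (toEuc p) (toEuc q) ≤ d) :
    ∃ U : ℕ → Set (Para n), (S ⊆ ⋃ k, U k) ∧
      (∀ k, EMetric.diam (U k) ≤ ENNReal.ofReal (Real.sqrt 2 * d)) ∧
      (∑' k, EMetric.diam (U k) ^ (s + 1) ≤
        ENNReal.ofReal (4 * Real.sqrt 2 ^ (s + 1) * d ^ s)) := by
  have hs1 : (0 : ℝ) < s + 1 := by linarith
  rcases S.eq_empty_or_nonempty with hE | ⟨b, hb⟩
  · refine ⟨fun _ => ∅, by simp [hE], by simp [EMetric.diam], ?_⟩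
    simp [EMetric.diam, ENNReal.zero_rpow_of_pos hs1]
  set K := ⌈1 / d⌉₊ with hK
  have hK1 : 1 ≤ K := Nat.ceil_pos.mpr (by positivity)
  have hKpos : (0 : ℝ) < (K : ℝ) := by exact_mod_cast hK1
  have hKd : 1 ≤ (K : ℝ) * d := by
    have h1 : 1 / d ≤ (K : ℝ) := Nat.le_ceil (1 / d)
    have := mul_le_mul_of_nonneg_right h1 hd.le
    rwa [one_div, inv_mul_cancel₀ hd.ne'] at this
  set h := d / K with hh
  have hhpos : 0 < h := div_pos hd hKpos
  have hhd2 : h ≤ d ^ 2 := by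
    rw [hh, div_le_iff₀ hKpos]
    nlinarith
  set u := Para.t b - d with hu
  set U : ℕ → Set (Para n) := fun k =>
    if k < 2 * K then S ∩ Para.t ⁻¹' Set.Icc (u + k * h) (u + (k + 1) * h) else ∅ with hU
  have tmem : ∀ p ∈ S, Para.t p ∈ Set.Icc u (u + 2 * d) := by
    intro p hp
    have h1 : |p.t - b.t| ≤ d := le_trans (abs_t_le_euc p b) (hS p hp b hb)
    rw [abs_le] at h1
    exact ⟨by rw [hu]; simp only [Para.t] at h1 ⊢; linarith [h1.2],
      by rw [hu]; simp only [Para.t] at h1 ⊢; linarith [h1.1]⟩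
  have hcover : S ⊆ ⋃ k, U k := by
    intro p hp
    have hNh : 2 * d ≤ (2 * K : ℕ) * h := by
      rw [hh]; push_cast; rw [mul_div_assoc']
      rw [le_div_iff₀ hKpos]; ring_nf; nlinarith
    have := Icc_subset_iUnion_Icc u (2 * d) h (2 * K) (by positivity) hhpos hNh (tmem p hp)
    obtain ⟨k, hk, hmem⟩ := Set.mem_iUnion₂.mp this
    refine Set.mem_iUnion.mpr ⟨k, ?_⟩
    rw [hU]
    simp only [if_pos (Finset.mem_range.mp hk)]
    exact ⟨hp, hmem⟩
  have hdiam : ∀ k, EMetric.diam (U k) ≤ ENNReal.ofReal (Real.sqrt 2 * d) := by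
    intro k
    rw [hU]
    dsimp only
    split_ifs with hk
    · apply EMetric.diam_le
      rintro p ⟨hpS, hpt⟩ q ⟨hqS, hqt⟩
      rw [edist_dist]
      apply ENNReal.ofReal_le_ofReal
      rw [para_dist_eq]
      have hx : ‖p.x - q.x‖ ≤ d := le_trans (norm_x_le_euc p q) (hS p hpS q hqS)
      simp only [Set.mem_preimage, Set.mem_Icc] at hpt hqt
      have ht : |p.t - q.t| ≤ h := by
        rw [abs_le]; constructor <;> [linarith [hpt.1, hqt.2]; linarith [hpt.2, hqt.1]]
      calc Real.sqrt (‖p.x - q.x‖ ^ 2 + |p.t - q.t|)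
          ≤ Real.sqrt (d ^ 2 + d ^ 2) := by
            apply Real.sqrt_le_sqrt
            have := pow_le_pow_left₀ (norm_nonneg _) hx 2
            linarith
        _ = Real.sqrt 2 * d := by
            rw [show d ^ 2 + d ^ 2 = 2 * d ^ 2 by ring, Real.sqrt_mul (by norm_num),
              Real.sqrt_sq hd.le]
    · simp [EMetric.diam]
  refine ⟨U, hcover, hdiam, ?_⟩
  have hzero : ∀ k ∉ Finset.range (2 * K), EMetric.diam (U k) ^ (s + 1) = 0 := by
    intro k hk
    rw [Finset.mem_range, not_lt] at hk
    rw [hU]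
    dsimp only
    rw [if_neg (by omega)]
    simp [EMetric.diam, ENNReal.zero_rpow_of_pos hs1]
  rw [tsum_eq_sum hzero]
  have main : ((2 * K : ℕ) : ℝ) * (Real.sqrt 2 * d) ^ (s + 1)
      ≤ 4 * Real.sqrt 2 ^ (s + 1) * d ^ s := by
    have hceil : (K : ℝ) ≤ 1 / d + 1 := (Nat.ceil_lt_add_one (by positivity)).le
    have hd' : 1 ≤ 1 / d := by rw [le_div_iff₀ hd]; linarith
    have hN : ((2 * K : ℕ) : ℝ) ≤ 4 / d := by
      push_cast
      have : 4 / d = 4 * (1 / d) := by ring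
      rw [this]; linarith
    have hmul : (Real.sqrt 2 * d) ^ (s + 1) = Real.sqrt 2 ^ (s + 1) * (d ^ s * d) := by
      rw [Real.mul_rpow (Real.sqrt_nonneg 2) hd.le, Real.rpow_add hd, Real.rpow_one]
    rw [hmul]
    have hX0 : (0 : ℝ) ≤ Real.sqrt 2 ^ (s + 1) := Real.rpow_nonneg (Real.sqrt_nonneg 2) _
    have hds : (0 : ℝ) ≤ d ^ s := Real.rpow_nonneg hd.le _
    calc ((2 * K : ℕ) : ℝ) * (Real.sqrt 2 ^ (s + 1) * (d ^ s * d))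
        ≤ (4 / d) * (Real.sqrt 2 ^ (s + 1) * (d ^ s * d)) :=
          mul_le_mul_of_nonneg_right hN (by positivity)
      _ = 4 * Real.sqrt 2 ^ (s + 1) * d ^ s := by
          field_simp
  calc ∑ k ∈ Finset.range (2 * K), EMetric.diam (U k) ^ (s + 1)
      ≤ ∑ _k ∈ Finset.range (2 * K), ENNReal.ofReal ((Real.sqrt 2 * d) ^ (s + 1)) := by
        apply Finset.sum_le_sum
        intro k _
        rw [← ENNReal.ofReal_rpow_of_nonneg (by positivity) hs1.le]
        exact ENNReal.rpow_le_rpow (hdiam k) hs1.le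
    _ = ((2 * K : ℕ) : ℝ≥0∞) * ENNReal.ofReal ((Real.sqrt 2 * d) ^ (s + 1)) := by
        rw [Finset.sum_const, Finset.card_range, nsmul_eq_mul]
    _ = ENNReal.ofReal (((2 * K : ℕ) : ℝ) * (Real.sqrt 2 * d) ^ (s + 1)) := by
        rw [ENNReal.ofReal_mul (by positivity), ENNReal.ofReal_natCast]
    _ ≤ ENNReal.ofReal (4 * Real.sqrt 2 ^ (s + 1) * d ^ s) := ENNReal.ofReal_le_ofReal main

end ParaHelpers
namespace ParaHelpers

open Para

variable {n : ℕ}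

lemma ineq2 (s : ℝ) (hs : 0 < s) (A : Set (Para n)) :
    μH[s] (toEuc '' A) ≤ μH[s] A := by
  set S : ℤ → Set (Para n) := fun k => Para.t ⁻¹' Set.Ico (k : ℝ) (k + 1) with hSdef
  have hSmeas : ∀ k, MeasurableSet (S k) :=
    fun k => continuous_t.measurable measurableSet_Ico
  have hSdisj : Pairwise (Function.onFun Disjoint S) := by
    intro i j hij
    simp only [Function.onFun, Set.disjoint_left]
    intro p hp hq
    simp only [hSdef, Set.mem_preimage, Set.mem_Ico] at hp hq
    apply hij
    have h1 : (i : ℝ) < (j : ℝ) + 1 := lt_of_le_of_lt hp.1 hq.2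
    have h2 : (j : ℝ) < (i : ℝ) + 1 := lt_of_le_of_lt hq.1 hp.2
    have h1' : i < j + 1 := by exact_mod_cast h1
    have h2' : j < i + 1 := by exact_mod_cast h2
    omega
  have hSunion : (⋃ k, S k) = Set.univ := by
    ext p
    simp only [hSdef, Set.mem_iUnion, Set.mem_preimage, Set.mem_Ico, Set.mem_univ, iff_true]
    exact ⟨⌊Para.t p⌋, Int.floor_le _, Int.lt_floor_add_one _⟩
  set B := toMeasurable (μH[s] : Measure (Para n)) A with hB
  have hAB : A ⊆ B := subset_toMeasurable _ _
  have lip : ∀ k, LipschitzOnWith 1 (toEuc : Para n → EucP n) (B ∩ S k) := by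
    intro k
    rw [lipschitzOnWith_iff_dist_le_mul]
    intro p hp q hq
    rw [NNReal.coe_one, one_mul]
    apply euc_dist_le
    obtain ⟨-, hp2⟩ := hp
    obtain ⟨-, hq2⟩ := hq
    simp only [hSdef, Set.mem_preimage, Set.mem_Ico] at hp2 hq2
    rw [abs_le]
    constructor <;> [linarith [hp2.1, hq2.2]; linarith [hp2.2, hq2.1]]
  calc μH[s] (toEuc '' A)
      ≤ μH[s] (⋃ k : ℤ, toEuc '' (B ∩ S k)) := by
        apply measure_mono
        rw [← Set.image_iUnion, ← Set.inter_iUnion, hSunion, Set.inter_univ]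
        exact Set.image_mono hAB
    _ ≤ ∑' k : ℤ, μH[s] (toEuc '' (B ∩ S k)) := measure_iUnion_le _
    _ ≤ ∑' k : ℤ, ((1 : ℝ≥0) : ℝ≥0∞) ^ s * μH[s] (B ∩ S k) :=
        ENNReal.tsum_le_tsum fun k => (lip k).hausdorffMeasure_image_le hs.le
    _ = ∑' k : ℤ, μH[s] (B ∩ S k) := by
        simp [ENNReal.one_rpow]
    _ = μH[s] (⋃ k, B ∩ S k) := by
        refine (measure_iUnion ?_ fun k => (measurableSet_toMeasurable _ _).inter (hSmeas k)).symm
        exact fun i j hij => ((hSdisj hij).mono Set.inter_subset_right Set.inter_subset_right)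
    _ = μH[s] B := by rw [← Set.inter_iUnion, hSunion, Set.inter_univ]
    _ = μH[s] A := measure_toMeasurable A

end ParaHelpers
namespace ParaHelpers

open Para

variable {n : ℕ}

lemma key (s : ℝ) (hs : 0 < s) (A : Set (Para n)) :
    μH[s + 1] A ≤ ENNReal.ofReal (4 * Real.sqrt 2 ^ (s + 1)) * μH[s] (toEuc '' A) := by
  set C := 4 * Real.sqrt 2 ^ (s + 1) with hC
  have hC0 : 0 < C := by positivity
  by_cases htop : μH[s] (toEuc '' A) = ⊤
  · rw [htop, ENNReal.mul_top (by simp only [ne_eq, ENNReal.ofReal_eq_zero, not_le]; exact hC0)]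
    exact le_top
  rw [MeasureTheory.Measure.hausdorffMeasure_apply]
  refine iSup₂_le fun r hr => ?_
  refine ENNReal.le_of_forall_pos_le_add fun η hη hlt => ?_
  -- set up small parameters
  have hmin_ne : min r 1 ≠ ⊤ := by
    intro hcon
    have := (min_le_right r 1).trans_eq' hcon
    simp at this
  set ρ := (min r 1).toReal / 2 with hρ
  have hρ0 : 0 < ρ := by
    apply div_pos _ two_pos
    exact ENNReal.toReal_pos (lt_min hr one_pos).ne' hmin_ne
  have htoReal1 : (min r 1).toReal ≤ 1 := by
    have h1 : min r 1 ≤ 1 := min_le_right _ _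
    calc (min r 1).toReal ≤ (1 : ℝ≥0∞).toReal := ENNReal.toReal_mono (by simp) h1
      _ = 1 := by simp
  have hρ1 : ρ ≤ 1 / 2 := by rw [hρ]; linarith
  set η₂ := (η : ℝ) / (2 * C) with hη₂
  have hη₂0 : 0 < η₂ := by positivity
  -- obtain a good Euclidean cover
  have hfine : μH[s] (toEuc '' A) ≠ ⊤ := htop
  have hinf : (⨅ (T : ℕ → Set (EucP n)) (_ : toEuc '' A ⊆ ⋃ m, T m)
        (_ : ∀ m, EMetric.diam (T m) ≤ ENNReal.ofReal ρ),
        ∑' m, ⨆ _ : (T m).Nonempty, EMetric.diam (T m) ^ s)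
      < μH[s] (toEuc '' A) + ENNReal.ofReal η₂ := by
    refine lt_of_le_of_lt ?_ (ENNReal.lt_add_right htop (by simp [ENNReal.ofReal_eq_zero]; linarith))
    conv_rhs => rw [MeasureTheory.Measure.hausdorffMeasure_apply]
    exact le_iSup₂ (f := fun (t : ℝ≥0∞) (_ : 0 < t) =>
      ⨅ (T : ℕ → Set (EucP n)) (_ : toEuc '' A ⊆ ⋃ m, T m)
        (_ : ∀ m, EMetric.diam (T m) ≤ t),
        ∑' m, ⨆ _ : (T m).Nonempty, EMetric.diam (T m) ^ s)
      (ENNReal.ofReal ρ) (by simp [hρ0])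
  simp only [iInf_lt_iff] at hinf
  obtain ⟨T, hTcov, hTdiam, hTsum⟩ := hinf
  have hTne : ∀ m, EMetric.diam (T m) ≠ ⊤ :=
    fun m => ((hTdiam m).trans_lt ENNReal.ofReal_lt_top).ne
  -- the per-piece scales
  set d : ℕ → ℝ := fun m => max (EMetric.diam (T m)).toReal
    (min ((η₂ / 2 / 2 ^ m) ^ s⁻¹) ρ) with hd
  have hd0 : ∀ m, 0 < d m := fun m =>
    lt_of_lt_of_le (lt_min (Real.rpow_pos_of_pos (by positivity) _) hρ0) (le_max_right _ _)
  have hdρ : ∀ m, d m ≤ ρ := by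
    intro m
    apply max_le _ (min_le_right _ _)
    rw [← ENNReal.ofReal_le_ofReal_iff hρ0.le] at *
    calc ENNReal.ofReal (EMetric.diam (T m)).toReal = EMetric.diam (T m) :=
          ENNReal.ofReal_toReal (hTne m)
      _ ≤ ENNReal.ofReal ρ := hTdiam m
  have hd1 : ∀ m, d m ≤ 1 := fun m => (hdρ m).trans (by linarith)
  have hdist : ∀ m, ∀ p ∈ (toEuc ⁻¹' (T m) : Set (Para n)), ∀ q ∈ toEuc ⁻¹' (T m),
      dist (toEuc p) (toEuc q) ≤ d m := by
    intro m p hp q hq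
    have h1 : edist (toEuc p) (toEuc q) ≤ EMetric.diam (T m) :=
      EMetric.edist_le_diam_of_mem hp hq
    have h2 : dist (toEuc p) (toEuc q) ≤ (EMetric.diam (T m)).toReal := by
      rw [dist_edist]
      exact ENNReal.toReal_mono (hTne m) h1
    exact h2.trans (le_max_left _ _)
  choose U hUcov hUdiam hUsum using fun m =>
    coverOne s hs (toEuc ⁻¹' (T m)) (d m) (hd0 m) (hd1 m) (hdist m)
  set e : ℕ ≃ ℕ × ℕ := (Denumerable.eqv (ℕ × ℕ)).symm with he
  set W : ℕ → Set (Para n) := fun j => U (e j).1 (e j).2 with hW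
  have hWcov : A ⊆ ⋃ j, W j := by
    intro a ha
    obtain ⟨m, hm⟩ := Set.mem_iUnion.mp (hTcov (Set.mem_image_of_mem _ ha))
    obtain ⟨k, hk⟩ := Set.mem_iUnion.mp (hUcov m hm)
    refine Set.mem_iUnion.mpr ⟨e.symm (m, k), ?_⟩
    rw [hW]
    simpa using hk
  have hsqrt2 : Real.sqrt 2 ≤ 2 := by
    nlinarith [Real.sq_sqrt (by norm_num : (0:ℝ) ≤ 2), Real.sqrt_nonneg 2]
  have hWdiam : ∀ j, EMetric.diam (W j) ≤ r := by
    intro j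
    refine (hUdiam (e j).1 (e j).2).trans ?_
    have h1 : Real.sqrt 2 * d (e j).1 ≤ (min r 1).toReal := by
      have h2 := hdρ (e j).1
      have h3 := hd0 (e j).1
      nlinarith [Real.sqrt_nonneg 2]
    calc ENNReal.ofReal (Real.sqrt 2 * d (e j).1)
        ≤ ENNReal.ofReal ((min r 1).toReal) := ENNReal.ofReal_le_ofReal h1
      _ = min r 1 := ENNReal.ofReal_toReal hmin_ne
      _ ≤ r := min_le_left _ _
  refine le_trans (iInf_le_of_le W (iInf_le_of_le hWcov (iInf_le_of_le hWdiam le_rfl))) ?_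
  -- now bound the sum
  have step1 : ∑' j, (⨆ _ : (W j).Nonempty, EMetric.diam (W j) ^ (s + 1))
      ≤ ∑' j, EMetric.diam (W j) ^ (s + 1) :=
    ENNReal.tsum_le_tsum fun j => iSup_le fun _ => le_rfl
  refine le_trans step1 ?_
  have step2 : ∑' j, EMetric.diam (W j) ^ (s + 1)
      = ∑' (p : ℕ × ℕ), EMetric.diam (U p.1 p.2) ^ (s + 1) :=
    e.tsum_eq fun p => EMetric.diam (U p.1 p.2) ^ (s + 1)
  rw [step2, ENNReal.tsum_prod (f := fun m k => EMetric.diam (U m k) ^ (s + 1))]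
  have hsplit : ∀ m, ENNReal.ofReal (d m ^ s)
      ≤ (⨆ _ : (T m).Nonempty, EMetric.diam (T m) ^ s)
        + ENNReal.ofReal (η₂ / 2 / 2 ^ m) := by
    intro m
    have hmax : d m ^ s ≤ (EMetric.diam (T m)).toReal ^ s
        + (min ((η₂ / 2 / 2 ^ m) ^ s⁻¹) ρ) ^ s := by
      rcases max_cases (EMetric.diam (T m)).toReal (min ((η₂ / 2 / 2 ^ m) ^ s⁻¹) ρ) with
        ⟨h1, _⟩ | ⟨h1, _⟩ <;> rw [hd] <;> simp only [] <;> rw [h1]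
      · exact le_add_of_nonneg_right (Real.rpow_nonneg (le_min (by positivity) hρ0.le) _)
      · exact le_add_of_nonneg_left (Real.rpow_nonneg ENNReal.toReal_nonneg _)
    have ha : ENNReal.ofReal ((EMetric.diam (T m)).toReal ^ s)
        ≤ ⨆ _ : (T m).Nonempty, EMetric.diam (T m) ^ s := by
      rcases (T m).eq_empty_or_nonempty with hE | hne
      · rw [hE]
        simp [EMetric.diam, EMetric.diam_empty, Real.zero_rpow hs.ne']
      · rw [iSup_pos hne, ← ENNReal.ofReal_rpow_of_nonneg ENNReal.toReal_nonneg hs.le,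
          ENNReal.ofReal_toReal (hTne m)]
    have hb : ENNReal.ofReal ((min ((η₂ / 2 / 2 ^ m) ^ s⁻¹) ρ) ^ s)
        ≤ ENNReal.ofReal (η₂ / 2 / 2 ^ m) := by
      apply ENNReal.ofReal_le_ofReal
      calc (min ((η₂ / 2 / 2 ^ m) ^ s⁻¹) ρ) ^ s
          ≤ ((η₂ / 2 / 2 ^ m) ^ s⁻¹) ^ s :=
            Real.rpow_le_rpow (le_min (by positivity) hρ0.le) (min_le_left _ _) hs.le
        _ = η₂ / 2 / 2 ^ m := Real.rpow_inv_rpow (by positivity) hs.ne'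
    calc ENNReal.ofReal (d m ^ s)
        ≤ ENNReal.ofReal ((EMetric.diam (T m)).toReal ^ s)
          + ENNReal.ofReal ((min ((η₂ / 2 / 2 ^ m) ^ s⁻¹) ρ) ^ s) := by
          rw [← ENNReal.ofReal_add (by positivity) (Real.rpow_nonneg (le_min (by positivity) hρ0.le) _)]
          exact ENNReal.ofReal_le_ofReal hmax
      _ ≤ _ := add_le_add ha hb
  have hgeo : ∑' m : ℕ, ENNReal.ofReal (η₂ / 2 / 2 ^ m) = ENNReal.ofReal η₂ := by
    rw [← ENNReal.ofReal_tsum_of_nonneg (fun m => by positivity) (summable_geometric_two' η₂),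
      tsum_geometric_two']
  calc ∑' m, ∑' k, EMetric.diam (U m k) ^ (s + 1)
      ≤ ∑' m, ENNReal.ofReal (C * d m ^ s) := by
        apply ENNReal.tsum_le_tsum
        intro m
        refine (hUsum m).trans_eq ?_
        rw [hC]
    _ = ENNReal.ofReal C * ∑' m, ENNReal.ofReal (d m ^ s) := by
        simp_rw [fun m => ENNReal.ofReal_mul (p := C) (q := d m ^ s) hC0.le]
        rw [ENNReal.tsum_mul_left]
    _ ≤ ENNReal.ofReal C * ((∑' m, ⨆ _ : (T m).Nonempty, EMetric.diam (T m) ^ s)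
          + ENNReal.ofReal η₂) := by
        apply mul_le_mul_right
        calc ∑' m, ENNReal.ofReal (d m ^ s)
            ≤ ∑' m, ((⨆ _ : (T m).Nonempty, EMetric.diam (T m) ^ s)
              + ENNReal.ofReal (η₂ / 2 / 2 ^ m)) := ENNReal.tsum_le_tsum hsplit
          _ = _ := by rw [ENNReal.tsum_add, hgeo]
    _ ≤ ENNReal.ofReal C * ((μH[s] (toEuc '' A) + ENNReal.ofReal η₂) + ENNReal.ofReal η₂) :=
        mul_le_mul_right (add_le_add hTsum.le le_rfl) _
    _ = ENNReal.ofReal C * μH[s] (toEuc '' A)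
        + ENNReal.ofReal C * ENNReal.ofReal (η₂ + η₂) := by
        rw [add_assoc, mul_add, ENNReal.ofReal_add hη₂0.le hη₂0.le]
    _ ≤ ENNReal.ofReal C * μH[s] (toEuc '' A) + η := by
        apply add_le_add_right
        rw [← ENNReal.ofReal_mul hC0.le]
        have : C * (η₂ + η₂) = (η : ℝ) := by
          rw [hη₂]; field_simp; ring
        rw [this, ENNReal.ofReal_coe_nnreal]

end ParaHelpers

/-- **Lemma 2.1.** `c(n,s) ℋ^{s+1}(A) ≤ ℋ^s_E(A) ≤ ℋ^s(A)` for all `A ⊆ 𝒫ⁿ`. -/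
theorem hausdorff_parabolic_euclidean_comparison (n : ℕ) (hn : 0 < n) (s : ℝ) (hs : 0 < s) :
    ∃ c : ℝ, 0 < c ∧ ∀ A : Set (Para n),
      ENNReal.ofReal c * μH[s + 1] A ≤ μH[s] (toEuc '' A) ∧
      μH[s] (toEuc '' A) ≤ μH[s] A := by
  refine ⟨(4 * Real.sqrt 2 ^ (s + 1))⁻¹, by positivity,
    fun A => ⟨?_, ParaHelpers.ineq2 s hs A⟩⟩
  have hC0 : (0 : ℝ) < 4 * Real.sqrt 2 ^ (s + 1) := by positivity
  calc ENNReal.ofReal (4 * Real.sqrt 2 ^ (s + 1))⁻¹ * μH[s + 1] A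
      ≤ ENNReal.ofReal (4 * Real.sqrt 2 ^ (s + 1))⁻¹ *
        (ENNReal.ofReal (4 * Real.sqrt 2 ^ (s + 1)) * μH[s] (toEuc '' A)) :=
        mul_le_mul_right (ParaHelpers.key s hs A) _
    _ = (ENNReal.ofReal (4 * Real.sqrt 2 ^ (s + 1))⁻¹
          * ENNReal.ofReal (4 * Real.sqrt 2 ^ (s + 1))) * μH[s] (toEuc '' A) :=
        (mul_assoc _ _ _).symm
    _ = μH[s] (toEuc '' A) := by
        rw [← ENNReal.ofReal_mul (by positivity), inv_mul_cancel₀ hC0.ne',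
          ENNReal.ofReal_one, one_mul]

end
end

section
/- If G ⊂ 𝒫ⁿ is a horizontal m-Lipschitz graph and G′ ⊂ 𝒫ⁿ is a vertical m-Lipschitz graph, then ℋ^m(G ∩ G′) = 0. -/
open MeasureTheory Metric Set Filter
open scoped ENNReal NNReal Topology

noncomputable section

open Para

-- helper
lemma my_le_of_sq_le_sq {A B : ℝ} (hA : 0 ≤ A) (hB : 0 ≤ B) (h : A^2 ≤ B^2) : A ≤ B := by
  nlinarith

set_option maxHeartbeats 2000000 in
theorem my_core {m w : ℕ} (hmw : w + 2 = m) (D : Set (Fin m → ℝ))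
    (τ : (Fin m → ℝ) → ℝ) (u : (Fin m → ℝ) → (Fin w → ℝ))
    (a b c : ℝ) (ha : 0 ≤ a) (hb : 0 ≤ b) (hc : 0 ≤ c)
    (h1 : ∀ p ∈ D, ∀ q ∈ D, |τ p - τ q| ≤ a * ‖p - q‖ ^ 2)
    (h2 : ∀ p ∈ D, ∀ q ∈ D, ‖u p - u q‖ ≤ b * ‖p - q‖)
    (h3 : ∀ p ∈ D, ∀ q ∈ D, ‖p - q‖ ^ 2 ≤ c * ‖u p - u q‖ ^ 2 + c * |τ p - τ q|) :
    volume D = 0 := by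
  by_contra hD0
  -- dimension
  have hfr : Module.finrank ℝ (Fin m → ℝ) = m := by simp
  have hm2 : 2 ≤ m := by omega
  -- constants
  set Ca : ℝ := (4*b+5)^w * (Real.sqrt (2*c+1))^m with hCa_def
  have hCa : 0 ≤ Ca := by positivity
  set e : ℝ := min 1 (Real.sqrt (1 / (2*(Ca+1)))) with he_def
  have he0 : 0 < e := by
    apply lt_min one_pos
    positivity
  have he1 : e ≤ 1 := min_le_left _ _
  have heCa : Ca * e^2 ≤ 1/2 := by
    have h1' : e ^ 2 ≤ 1 / (2*(Ca+1)) := by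
      have : e ≤ Real.sqrt (1 / (2*(Ca+1))) := min_le_right _ _
      have h2' := pow_le_pow_left₀ he0.le this 2
      rwa [Real.sq_sqrt (by positivity)] at h2'
    have : Ca * e^2 ≤ Ca * (1 / (2*(Ca+1))) := by
      apply mul_le_mul_of_nonneg_left h1' hCa
    calc Ca * e^2 ≤ Ca * (1 / (2*(Ca+1))) := this
      _ ≤ 1/2 := by
          rw [mul_one_div, div_le_iff₀ (by positivity)]
          nlinarith
  set N : ℕ := ⌈18*(a+1)/e^2⌉₊ with hN_def
  have hN1 : 1 ≤ N := by
    rw [hN_def]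
    apply Nat.one_le_ceil_iff.mpr
    positivity
  have hNpos : (0:ℝ) < N := by exact_mod_cast hN1
  have hNge : 18*(a+1)/e^2 ≤ N := Nat.le_ceil _
  have hN1R : (1:ℝ) ≤ N := by exact_mod_cast hN1
  have hchainC : 18 * a / N ≤ e^2 := by
    rw [div_le_iff₀ hNpos]
    have h18 : 18*(a+1) ≤ N * e^2 := by
      rw [div_le_iff₀ (by positivity)] at hNge
      linarith
    nlinarith
  set β : ℝ := (1/(4*N))^m with hβ_def
  have hβ0 : 0 < β := by positivity
  have hβhalf : β ≤ 1/2 := by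
    calc β ≤ (1/4)^m := by
            apply pow_le_pow_left₀ (by positivity)
            have hN1' : (1:ℝ) ≤ N := by exact_mod_cast hN1
            rw [div_le_div_iff₀ (by positivity) (by norm_num)]
            nlinarith
      _ ≤ (1/4)^1 := by
            apply pow_le_pow_of_le_one (by norm_num) (by norm_num); omega
      _ ≤ 1/2 := by norm_num
  set v : ℝ≥0∞ := ENNReal.ofReal (1 - β) with hv_def
  have hv1 : v < 1 := by
    rw [hv_def]
    rw [ENNReal.ofReal_lt_one]
    linarith
  -- density point
  obtain ⟨x₀, hx₀⟩ : ∃ x₀, Tendsto (fun r => volume (D ∩ closedBall x₀ r) / volume (closedBall x₀ r)) (𝓝[>] 0) (𝓝 1) := by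
    have hae := Besicovitch.ae_tendsto_measure_inter_div (volume : Measure (Fin m → ℝ)) D
    have hne : (volume.restrict D) ≠ 0 := by
      intro h
      apply hD0
      have := Measure.restrict_apply_univ (μ := (volume : Measure (Fin m → ℝ))) D
      rw [h] at this
      simpa using this.symm
    have : (ae (volume.restrict D)).NeBot := ae_neBot.mpr hne
    exact hae.exists
  have hev : ∀ᶠ r in 𝓝[>] (0:ℝ), v < volume (D ∩ closedBall x₀ r) / volume (closedBall x₀ r) :=
    hx₀.eventually_const_lt hv1
  obtain ⟨R, hR0, hRs⟩ : ∃ R > 0, Ioo (0:ℝ) R ⊆ {r | v < volume (D ∩ closedBall x₀ r) / volume (closedBall x₀ r)} := by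
    rcases (nhdsGT_basis (0:ℝ)).eventually_iff.mp hev with ⟨R, hR0, hR⟩
    exact ⟨R, hR0, hR⟩
  set r : ℝ := R/4 with hr_def
  have hr0 : 0 < r := by positivity
  have hrmem : v < volume (D ∩ closedBall x₀ r) / volume (closedBall x₀ r) := hRs ⟨hr0, by rw [hr_def]; linarith⟩
  have hr2mem : v < volume (D ∩ closedBall x₀ (2*r)) / volume (closedBall x₀ (2*r)) := hRs ⟨by positivity, by rw [hr_def]; linarith⟩
  set B1 : ℝ≥0∞ := volume (ball (0 : Fin m → ℝ) 1) with hB1_def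
  have hball_vol : ∀ (y : Fin m → ℝ) (s : ℝ), 0 ≤ s → volume (closedBall y s) = ENNReal.ofReal (s ^ m) * B1 := by
    intro y s hs
    have := Measure.addHaar_closedBall (volume : Measure (Fin m → ℝ)) y hs
    rwa [hfr] at this
  have hB1pos : 0 < B1 := by
    rw [hB1_def]; exact measure_ball_pos _ _ one_pos
  have hB1top : B1 < ⊤ := by
    rw [hB1_def]; exact measure_ball_lt_top
  -- from ratio to measure
  have hratio : ∀ s : ℝ, 0 < s → v < volume (D ∩ closedBall x₀ s) / volume (closedBall x₀ s) →
      v * volume (closedBall x₀ s) < volume (D ∩ closedBall x₀ s) := by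
    intro s hs h
    have h0 : volume (closedBall x₀ s) ≠ 0 := (measure_closedBall_pos _ _ hs).ne'
    have htop : volume (closedBall x₀ s) ≠ ⊤ := measure_closedBall_lt_top.ne
    rwa [ENNReal.lt_div_iff_mul_lt (Or.inl h0) (Or.inl htop)] at h
  have hlow : v * volume (closedBall x₀ r) < volume (D ∩ closedBall x₀ r) := hratio r hr0 hrmem
  have hlow2 : v * volume (closedBall x₀ (2*r)) < volume (D ∩ closedBall x₀ (2*r)) := hratio _ (by positivity) hr2mem
  -- every small ball near x₀ meets D
  have hmeets : ∀ y ∈ closedBall x₀ r, (D ∩ closedBall y (r / N)).Nonempty := by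
    intro y hy
    by_contra hemp
    rw [Set.not_nonempty_iff_eq_empty] at hemp
    have hsub : D ∩ closedBall x₀ (2*r) ⊆ closedBall x₀ (2*r) \ closedBall y (r/N) := by
      intro z hz
      refine ⟨hz.2, fun hzy => ?_⟩
      have : z ∈ D ∩ closedBall y (r/N) := ⟨hz.1, hzy⟩
      rw [hemp] at this
      exact this
    have hsubball : closedBall y (r/N) ⊆ closedBall x₀ (2*r) := by
      apply closedBall_subset_closedBall'
      have : dist y x₀ ≤ r := mem_closedBall.mp hy
      have hrN : r / N ≤ r := by
        rw [div_le_iff₀ hNpos]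
        nlinarith [hN1R, hr0.le]
      linarith
    have hdiff : volume (closedBall x₀ (2*r) \ closedBall y (r/N))
        = volume (closedBall x₀ (2*r)) - volume (closedBall y (r/N)) :=
      measure_diff hsubball measurableSet_closedBall.nullMeasurableSet measure_closedBall_lt_top.ne
    have hub : volume (D ∩ closedBall x₀ (2*r)) ≤ v * volume (closedBall x₀ (2*r)) := by
      calc volume (D ∩ closedBall x₀ (2*r)) ≤ volume (closedBall x₀ (2*r) \ closedBall y (r/N)) :=
            measure_mono hsub
        _ = volume (closedBall x₀ (2*r)) - volume (closedBall y (r/N)) := hdiff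
        _ ≤ v * volume (closedBall x₀ (2*r)) := by
            rw [hball_vol _ _ (by positivity), hball_vol _ _ (by positivity), hv_def,
              ← mul_assoc, ← ENNReal.ofReal_mul (by linarith),
              ← ENNReal.sub_mul (fun _ _ => hB1top.ne)]
            apply mul_le_mul_left _ B1
            rw [← ENNReal.ofReal_sub _ (by positivity)]
            apply ENNReal.ofReal_le_ofReal
            -- (2r)^m - (r/N)^m ≤ (1-β)(2r)^m
            have hkey : β * (2*r)^m ≤ (r/N)^m := by
              have : β * (2*r)^m = (2*r/(4*N))^m := by
                rw [hβ_def, ← mul_pow]; congr 1; ring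
              rw [this]
              apply pow_le_pow_left₀ (by positivity)
              rw [div_le_div_iff₀ (by positivity) hNpos]
              nlinarith
            nlinarith [pow_nonneg (by positivity : (0:ℝ) ≤ 2*r) m]
    exact absurd hub (not_le.mpr hlow2)
  -- oscillation of τ on D ∩ B(x₀,r)
  have hosc : ∀ p ∈ D ∩ closedBall x₀ r, ∀ q ∈ D ∩ closedBall x₀ r, |τ p - τ q| ≤ e^2 * r^2 := by
    intro p hp q hq
    set y : ℕ → (Fin m → ℝ) := fun i => p + ((i:ℝ)/N) • (q - p) with hy_def
    have hy_mem : ∀ i : ℕ, i ≤ N → y i ∈ closedBall x₀ r := by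
      intro i hi
      have h0i : (0:ℝ) ≤ (i:ℝ)/N := by positivity
      have h1i : (i:ℝ)/N ≤ 1 := by
        rw [div_le_one hNpos]; exact_mod_cast hi
      have hmem := (convex_closedBall x₀ r) hp.2 hq.2 (by linarith : (0:ℝ) ≤ 1 - (i:ℝ)/N) h0i (by ring)
      have hyeq : y i = (1 - (i:ℝ)/N) • p + ((i:ℝ)/N) • q := by
        rw [hy_def]; simp only [smul_sub, sub_smul, one_smul]; abel
      rw [hyeq]; exact hmem
    have hz_ex : ∀ i : ℕ, i ≤ N → ∃ zz, zz ∈ D ∩ closedBall (y i) (r/N) := by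
      intro i hi
      exact (hmeets (y i) (hy_mem i hi)).imp (fun zz hzz => hzz)
    choose! z hz using hz_ex
    have hdistzy : ∀ i : ℕ, i ≤ N → ‖z i - y i‖ ≤ r/N := by
      intro i hi
      have := (hz i hi).2
      rwa [mem_closedBall, dist_eq_norm] at this
    have hzD : ∀ i : ℕ, i ≤ N → z i ∈ D := fun i hi => (hz i hi).1
    have hpq : ‖q - p‖ ≤ 2*r := by
      have h1' := mem_closedBall.mp hp.2
      have h2' := mem_closedBall.mp hq.2
      calc ‖q - p‖ = dist q p := (dist_eq_norm q p).symm
        _ ≤ dist q x₀ + dist x₀ p := dist_triangle _ _ _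
        _ ≤ r + r := by rw [dist_comm x₀ p]; exact add_le_add h2' h1'
        _ = 2*r := by ring
    have hystep : ∀ i : ℕ, ‖y (i+1) - y i‖ ≤ 2*r/N := by
      intro i
      have hyd : y (i+1) - y i = ((1:ℝ)/N) • (q - p) := by
        rw [hy_def]
        simp only
        rw [add_sub_add_left_eq_sub, ← sub_smul]
        congr 1
        push_cast
        field_simp
        ring
      rw [hyd, norm_smul]
      rw [show ‖(1:ℝ)/(N:ℝ)‖ = 1/(N:ℝ) by
        rw [Real.norm_eq_abs, abs_of_nonneg (by positivity)]]
      calc 1/(N:ℝ) * ‖q - p‖ ≤ 1/(N:ℝ) * (2*r) := by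
            apply mul_le_mul_of_nonneg_left hpq (by positivity)
        _ = 2*r/N := by ring
    have hzstep : ∀ i : ℕ, i + 1 ≤ N → ‖z (i+1) - z i‖ ≤ 4*r/N := by
      intro i hi
      calc ‖z (i+1) - z i‖ = ‖(z (i+1) - y (i+1)) + (y (i+1) - y i) + (y i - z i)‖ := by
            congr 1; abel
        _ ≤ ‖z (i+1) - y (i+1)‖ + ‖y (i+1) - y i‖ + ‖y i - z i‖ := by
            refine (norm_add_le _ _).trans (add_le_add_left (norm_add_le _ _) _)
        _ ≤ r/N + 2*r/N + r/N := by
            refine add_le_add (add_le_add (hdistzy _ hi) (hystep i)) ?_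
            rw [norm_sub_rev]; exact hdistzy i (by omega)
        _ = 4*r/N := by ring
    have htaustep : ∀ i : ℕ, i + 1 ≤ N → |τ (z (i+1)) - τ (z i)| ≤ a * (4*r/N)^2 := by
      intro i hi
      calc |τ (z (i+1)) - τ (z i)| ≤ a * ‖z (i+1) - z i‖^2 :=
            h1 _ (hzD _ hi) _ (hzD i (by omega))
        _ ≤ a * (4*r/N)^2 := by
            apply mul_le_mul_of_nonneg_left _ ha
            apply pow_le_pow_left₀ (norm_nonneg _) (hzstep i hi)
    have htel : |τ (z N) - τ (z 0)| ≤ N * (a * (4*r/N)^2) := by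
      have hsum : τ (z N) - τ (z 0) = ∑ i ∈ Finset.range N, (τ (z (i+1)) - τ (z i)) :=
        (Finset.sum_range_sub (fun i => τ (z i)) N).symm
      rw [hsum]
      calc |∑ i ∈ Finset.range N, (τ (z (i+1)) - τ (z i))|
          ≤ ∑ i ∈ Finset.range N, |τ (z (i+1)) - τ (z i)| := Finset.abs_sum_le_sum_abs _ _
        _ ≤ ∑ _i ∈ Finset.range N, a * (4*r/N)^2 :=
            Finset.sum_le_sum (fun i hi => htaustep i (Finset.mem_range.mp hi))
        _ = N * (a * (4*r/N)^2) := by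
            rw [Finset.sum_const, Finset.card_range, nsmul_eq_mul]
    have hend0 : |τ p - τ (z 0)| ≤ a * (r/N)^2 := by
      calc |τ p - τ (z 0)| ≤ a * ‖p - z 0‖^2 := h1 _ hp.1 _ (hzD 0 (by omega))
        _ ≤ a * (r/N)^2 := by
            apply mul_le_mul_of_nonneg_left _ ha
            apply pow_le_pow_left₀ (norm_nonneg _)
            have hy0 : y 0 = p := by rw [hy_def]; simp
            have := hdistzy 0 (by omega)
            rw [hy0, norm_sub_rev] at this
            exact this
    have hendN : |τ (z N) - τ q| ≤ a * (r/N)^2 := by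
      calc |τ (z N) - τ q| ≤ a * ‖z N - q‖^2 := h1 _ (hzD N le_rfl) _ hq.1
        _ ≤ a * (r/N)^2 := by
            apply mul_le_mul_of_nonneg_left _ ha
            apply pow_le_pow_left₀ (norm_nonneg _)
            have hyN : y N = q := by
              rw [hy_def]; simp only [div_self hNpos.ne', one_smul]
              abel
            have := hdistzy N le_rfl
            rwa [hyN] at this
    have e1 : a*(r/N)^2 ≤ a*r^2/N := by
      rw [div_pow, mul_div_assoc]
      apply mul_le_mul_of_nonneg_left _ ha
      rw [div_le_div_iff₀ (by positivity) hNpos]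
      have hNN : (N:ℝ) ≤ (N:ℝ)^2 := by nlinarith [hN1R]
      calc r^2 * N ≤ r^2 * (N:ℝ)^2 := mul_le_mul_of_nonneg_left hNN (sq_nonneg r)
        _ = r^2 * (N:ℝ)^2 := rfl
    have e2 : (N:ℝ)*(a*(4*r/N)^2) = 16*a*r^2/N := by
      field_simp
      ring
    have efin : (18*a/N)*r^2 ≤ e^2*r^2 :=
      mul_le_mul_of_nonneg_right hchainC (sq_nonneg r)
    calc |τ p - τ q| = |(τ p - τ (z 0)) + (τ (z 0) - τ (z N)) + (τ (z N) - τ q)| := by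
          congr 1; ring
      _ ≤ |τ p - τ (z 0)| + |τ (z 0) - τ (z N)| + |τ (z N) - τ q| := by
          refine (abs_add_le _ _).trans (add_le_add_left (abs_add_le _ _) _)
      _ ≤ a*(r/N)^2 + N * (a * (4*r/N)^2) + a*(r/N)^2 := by
          refine add_le_add (add_le_add hend0 ?_) hendN
          rw [abs_sub_comm]; exact htel
      _ ≤ a*r^2/N + 16*a*r^2/N + a*r^2/N := by
          rw [e2]; exact add_le_add (add_le_add e1 le_rfl) e1
      _ = (18*a/N)*r^2 := by ring
      _ ≤ e^2*r^2 := efin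
  -- anchor point
  have hDne : (D ∩ closedBall x₀ r).Nonempty := by
    apply nonempty_of_measure_ne_zero (μ := volume)
    intro h0
    rw [h0] at hlow
    simp at hlow
  obtain ⟨pb, hpb⟩ := hDne
  set δ : ℝ := e * r with hδ_def
  have hδ0 : 0 < δ := by positivity
  set M₀ : ℤ := ⌈2*b/e⌉ + 1 with hM0_def
  have hM0ge : (2*b/e : ℝ) ≤ M₀ := by
    rw [hM0_def]
    push_cast
    have := Int.le_ceil (2*b/e)
    linarith
  have hM0pos : 0 < M₀ := by
    rw [hM0_def]
    have : (0:ℤ) ≤ ⌈2*b/e⌉ := Int.ceil_nonneg (by positivity)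
    omega
  set zfl : (Fin m → ℝ) → (Fin w → ℤ) := fun ξ j => ⌊u ξ j / δ⌋ with hzfl_def
  set I : Finset (Fin w → ℤ) :=
    Finset.Icc (fun j => zfl pb j - M₀) (fun j => zfl pb j + M₀) with hI_def
  have hcoord : ∀ ξ ∈ D ∩ closedBall x₀ r, ∀ j, |u ξ j / δ - u pb j / δ| ≤ (M₀:ℝ) := by
    intro ξ hξ j
    have hdpq : ‖ξ - pb‖ ≤ 2*r := by
      have h1' := mem_closedBall.mp hξ.2
      have h2' := mem_closedBall.mp hpb.2
      calc ‖ξ - pb‖ = dist ξ pb := (dist_eq_norm _ _).symm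
        _ ≤ dist ξ x₀ + dist x₀ pb := dist_triangle _ _ _
        _ ≤ r + r := by rw [dist_comm x₀ pb]; exact add_le_add h1' h2'
        _ = 2*r := by ring
    have hj : |u ξ j - u pb j| ≤ 2*b*r := by
      have h0 : |u ξ j - u pb j| = ‖(u ξ - u pb) j‖ := by
        rw [Pi.sub_apply, Real.norm_eq_abs]
      rw [h0]
      calc ‖(u ξ - u pb) j‖ ≤ ‖u ξ - u pb‖ := norm_le_pi_norm _ j
        _ ≤ b * ‖ξ - pb‖ := h2 _ hξ.1 _ hpb.1
        _ ≤ b * (2*r) := mul_le_mul_of_nonneg_left hdpq hb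
        _ = 2*b*r := by ring
    have hdiv : |u ξ j / δ - u pb j / δ| = |u ξ j - u pb j| / δ := by
      rw [div_sub_div_same, abs_div, abs_of_pos hδ0]
    rw [hdiv]
    calc |u ξ j - u pb j| / δ ≤ (2*b*r) / δ := by gcongr
      _ = 2*b/e := by rw [hδ_def]; field_simp
      _ ≤ M₀ := hM0ge
  have hcover : ∀ ξ ∈ D ∩ closedBall x₀ r, zfl ξ ∈ I := by
    intro ξ hξ
    rw [hI_def, Finset.mem_Icc]
    constructor <;> rw [Pi.le_def] <;> intro j <;>
      rcases abs_le.mp (hcoord ξ hξ j) with ⟨hlo, hhi⟩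
    · have : (u pb j / δ) - (M₀ : ℝ) ≤ u ξ j / δ := by linarith
      have h2' : ⌊u pb j / δ - (M₀:ℝ)⌋ ≤ ⌊u ξ j / δ⌋ := Int.floor_le_floor this
      rw [Int.floor_sub_intCast] at h2'
      simpa [hzfl_def] using h2'
    · have : u ξ j / δ ≤ (u pb j / δ) + (M₀ : ℝ) := by linarith
      have h2' : ⌊u ξ j / δ⌋ ≤ ⌊u pb j / δ + (M₀:ℝ)⌋ := Int.floor_le_floor this
      rw [Int.floor_add_intCast] at h2'
      simpa [hzfl_def] using h2'
  set ρ : ℝ := Real.sqrt (2*c+1) * (e*r) with hρ_def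
  have hρ0 : 0 ≤ ρ := by positivity
  have hsum : volume (D ∩ closedBall x₀ r)
      ≤ ∑ zc ∈ I, volume {ξ ∈ D ∩ closedBall x₀ r | zfl ξ = zc} := by
    refine (measure_mono ?_).trans (measure_biUnion_finset_le I _)
    intro ξ hξ
    exact Set.mem_biUnion (hcover ξ hξ) ⟨hξ, rfl⟩
  have hcell : ∀ zc ∈ I, volume {ξ ∈ D ∩ closedBall x₀ r | zfl ξ = zc}
      ≤ ENNReal.ofReal (ρ^m) * B1 := by
    intro zc _
    rcases Set.eq_empty_or_nonempty {ξ ∈ D ∩ closedBall x₀ r | zfl ξ = zc} with hE | hne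
    · rw [hE]; simp
    · obtain ⟨ph, hph⟩ := hne
      have hsubball : {ξ ∈ D ∩ closedBall x₀ r | zfl ξ = zc} ⊆ closedBall ph ρ := by
        intro ξ hξ
        have hu : ‖u ξ - u ph‖ ≤ δ := by
          rw [pi_norm_le_iff_of_nonneg hδ0.le]
          intro j
          have hfl : ⌊u ξ j / δ⌋ = ⌊u ph j / δ⌋ := by
            have e1' : zfl ξ j = zfl ph j := by rw [hξ.2, hph.2]
            rw [hzfl_def] at e1'
            exact e1'
          have hl1 := Int.floor_le (u ξ j / δ)
          have hl2 := Int.lt_floor_add_one (u ξ j / δ)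
          have hl3 := Int.floor_le (u ph j / δ)
          have hl4 := Int.lt_floor_add_one (u ph j / δ)
          rw [hfl] at hl1 hl2
          have habs : |u ξ j / δ - u ph j / δ| ≤ 1 := by
            rw [abs_le]; constructor <;> linarith
          have : |u ξ j - u ph j| ≤ δ := by
            have hd : |u ξ j / δ - u ph j / δ| = |u ξ j - u ph j| / δ := by
              rw [div_sub_div_same, abs_div, abs_of_pos hδ0]
            rw [hd, div_le_one hδ0] at habs
            exact habs
          rw [Pi.sub_apply, Real.norm_eq_abs]
          exact this
        have hτ' : |τ ξ - τ ph| ≤ e^2*r^2 := hosc ξ hξ.1 ph hph.1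
        have h3' := h3 ξ hξ.1.1 ph hph.1.1
        have hξph2 : ‖ξ - ph‖^2 ≤ ρ^2 := by
          have hρ2 : ρ^2 = (2*c+1) * (e*r)^2 := by
            rw [hρ_def, mul_pow, Real.sq_sqrt (by positivity)]
          have hu2 : ‖u ξ - u ph‖^2 ≤ δ^2 := pow_le_pow_left₀ (norm_nonneg _) hu 2
          rw [hρ2]
          calc ‖ξ - ph‖^2 ≤ c * ‖u ξ - u ph‖^2 + c * |τ ξ - τ ph| := h3'
            _ ≤ c * δ^2 + c * (e^2*r^2) := by
                exact add_le_add (mul_le_mul_of_nonneg_left hu2 hc)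
                  (mul_le_mul_of_nonneg_left hτ' hc)
            _ ≤ (2*c+1) * (e*r)^2 := by
                rw [hδ_def]
                nlinarith [sq_nonneg (e*r)]
        have : ‖ξ - ph‖ ≤ ρ := my_le_of_sq_le_sq (norm_nonneg _) hρ0 hξph2
        rw [mem_closedBall, dist_eq_norm]
        exact this
      calc volume {ξ ∈ D ∩ closedBall x₀ r | zfl ξ = zc} ≤ volume (closedBall ph ρ) :=
            measure_mono hsubball
        _ = ENNReal.ofReal (ρ^m) * B1 := hball_vol _ _ hρ0
  have hcard : I.card ≤ ((2*M₀+1).toNat)^w := by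
    rw [hI_def, Pi.card_Icc]
    calc ∏ j : Fin w, (Finset.Icc (zfl pb j - M₀) (zfl pb j + M₀)).card
        ≤ ∏ _j : Fin w, ((2*M₀+1).toNat) :=
          Finset.prod_le_prod' (fun j _ => by
            rw [Int.card_Icc]
            apply le_of_eq
            congr 1
            ring)
      _ = ((2*M₀+1).toNat)^w := by
          rw [Finset.prod_const, Finset.card_univ, Fintype.card_fin]
  have hup : volume (D ∩ closedBall x₀ r)
      ≤ (((2*M₀+1).toNat : ℝ≥0∞))^w * (ENNReal.ofReal (ρ^m) * B1) := by
    calc volume (D ∩ closedBall x₀ r)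
        ≤ ∑ zc ∈ I, volume {ξ ∈ D ∩ closedBall x₀ r | zfl ξ = zc} := hsum
      _ ≤ ∑ _zc ∈ I, ENNReal.ofReal (ρ^m) * B1 := Finset.sum_le_sum hcell
      _ = (I.card : ℝ≥0∞) * (ENNReal.ofReal (ρ^m) * B1) := by
          rw [Finset.sum_const, nsmul_eq_mul]
      _ ≤ (((2*M₀+1).toNat : ℝ≥0∞))^w * (ENNReal.ofReal (ρ^m) * B1) := by
          apply mul_le_mul_left
          have : ((I.card : ℕ) : ℝ≥0∞) ≤ ((((2*M₀+1).toNat)^w : ℕ) : ℝ≥0∞) := by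
            exact_mod_cast Nat.cast_le.mpr hcard
          simpa using this
  -- real arithmetic
  set A : ℝ := (((2*M₀+1).toNat : ℕ) : ℝ) with hA_def
  have hApos : 0 ≤ A := by positivity
  have hA : A ≤ (4*b+5)/e := by
    have h2M : (0:ℤ) ≤ 2*M₀+1 := by linarith [hM0pos]
    have h1' : A = ((2*M₀+1 : ℤ) : ℝ) := by
      rw [hA_def]; exact_mod_cast Int.toNat_of_nonneg h2M
    rw [h1', hM0_def]
    push_cast
    have hc2 : (⌈2*b/e⌉ : ℝ) ≤ 2*b/e + 1 := le_of_lt (Int.ceil_lt_add_one _)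
    have h5 : (5:ℝ) ≤ 5/e := by rw [le_div_iff₀ he0]; linarith
    have hsplit : (4*b+5)/e = 2*(2*b/e) + 5/e := by ring
    rw [hsplit]
    linarith
  have hreal : A^w * ρ^m ≤ (1-β) * r^m := by
    have hew : (0:ℝ) < e^w := pow_pos he0 w
    have hρm : ρ^m = Real.sqrt (2*c+1)^m * (e^w * e^2) * r^m := by
      rw [hρ_def, mul_pow, mul_pow, ← pow_add, hmw]
      ring
    have hAw : A^w ≤ ((4*b+5)/e)^w := pow_le_pow_left₀ hApos hA w
    have hstep : A^w * ρ^m ≤ ((4*b+5)/e)^w * ρ^m :=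
      mul_le_mul_of_nonneg_right hAw (by positivity)
    have heq : ((4*b+5)/e)^w * ρ^m = Ca * e^2 * r^m := by
      rw [hρm, hCa_def, div_pow]
      field_simp
    have hrm : (0:ℝ) ≤ r^m := by positivity
    calc A^w * ρ^m ≤ ((4*b+5)/e)^w * ρ^m := hstep
      _ = Ca * e^2 * r^m := heq
      _ ≤ (1/2) * r^m := mul_le_mul_of_nonneg_right heCa hrm
      _ ≤ (1-β) * r^m := mul_le_mul_of_nonneg_right (by linarith) hrm
  -- final contradiction
  have hfinal : volume (D ∩ closedBall x₀ r) ≤ v * volume (closedBall x₀ r) := by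
    have hconv : (((2*M₀+1).toNat : ℝ≥0∞))^w * (ENNReal.ofReal (ρ^m) * B1)
        = ENNReal.ofReal (A^w * ρ^m) * B1 := by
      rw [ENNReal.ofReal_mul (by positivity), ← mul_assoc]
      congr 1
      rw [hA_def, ← ENNReal.ofReal_natCast ((2*M₀+1).toNat), ← ENNReal.ofReal_pow (by positivity)]
    calc volume (D ∩ closedBall x₀ r)
        ≤ (((2*M₀+1).toNat : ℝ≥0∞))^w * (ENNReal.ofReal (ρ^m) * B1) := hup
      _ = ENNReal.ofReal (A^w * ρ^m) * B1 := hconv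
      _ ≤ ENNReal.ofReal ((1-β) * r^m) * B1 :=
          mul_le_mul_left (ENNReal.ofReal_le_ofReal hreal) B1
      _ = v * volume (closedBall x₀ r) := by
          rw [hball_vol _ _ hr0.le, hv_def, ← mul_assoc, ← ENNReal.ofReal_mul (by linarith)]
  exact absurd hfinal (not_le.mpr hlow)

section Bridge
variable {n : ℕ}

lemma inner_euc (v w : Para n) : (inner ℝ (eucEquiv (n:=n) v) (eucEquiv (n:=n) w) : ℝ)
    = inner ℝ (Para.x v) (Para.x w) + Para.t v * Para.t w := by
  rw [WithLp.prod_inner_apply]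
  have h2 : (inner ℝ (WithLp.ofLp (eucEquiv (n:=n) v)).snd (WithLp.ofLp (eucEquiv (n:=n) w)).snd : ℝ)
      = Para.t v * Para.t w := by
    show (inner ℝ (Para.t v) (Para.t w) : ℝ) = Para.t v * Para.t w
    simp [mul_comm]
  rw [h2]
  rfl

lemma norm_euc_sq (v : Para n) : ‖eucEquiv (n:=n) v‖^2 = ‖Para.x v‖^2 + (Para.t v)^2 := by
  rw [← real_inner_self_eq_norm_sq, inner_euc, real_inner_self_eq_norm_sq]
  ring

lemma perp_inner_zero (V : Submodule ℝ (Para n)) (γ : Para n) (hγ : γ ∈ perp V)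
    (v : Para n) (hv : v ∈ V) :
    (inner ℝ (eucEquiv (n:=n) γ) (eucEquiv (n:=n) v) : ℝ) = 0 := by
  rw [perp, Submodule.mem_comap, Submodule.mem_orthogonal] at hγ
  rw [real_inner_comm]
  exact hγ _ (Submodule.mem_map_of_mem hv)

lemma pnorm_nonneg' (v : Para n) : 0 ≤ pnorm v := Real.sqrt_nonneg _

lemma pnorm_sq (v : Para n) : pnorm v ^ 2 = ‖Para.x v‖^2 + |Para.t v| :=
  Real.sq_sqrt (by positivity)

lemma abs_t_le_pnorm_sq (v : Para n) : |Para.t v| ≤ pnorm v ^ 2 := by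
  rw [pnorm_sq]
  nlinarith [sq_nonneg ‖Para.x v‖]

lemma norm_x_le_pnorm (v : Para n) : ‖Para.x v‖ ≤ pnorm v := by
  have h := pnorm_sq v
  nlinarith [pnorm_nonneg' v, abs_nonneg (Para.t v), norm_nonneg (Para.x v)]

lemma pnorm_eq_of_t_zero (v : Para n) (h : Para.t v = 0) : pnorm v = ‖Para.x v‖ := by
  rw [pnorm, h]
  simp

lemma norm_euc_eq_of_t_zero (v : Para n) (h : Para.t v = 0) :
    ‖eucEquiv (n:=n) v‖ = ‖Para.x v‖ := by
  have h1 := norm_euc_sq v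
  rw [h] at h1
  nlinarith [norm_nonneg (eucEquiv (n:=n) v), norm_nonneg (Para.x v)]

lemma x_smul' (r : ℝ) (v : Para n) : Para.x (r • v) = r • Para.x v := rfl
lemma t_smul' (r : ℝ) (v : Para n) : Para.t (r • v) = r * Para.t v := rfl
lemma x_et : Para.x (Para.ofProd ((0 : EuclideanSpace ℝ (Fin n)), (1:ℝ))) = 0 := rfl
lemma t_et : Para.t (Para.ofProd ((0 : EuclideanSpace ℝ (Fin n)), (1:ℝ))) = 1 := rfl

/-- `t` as a linear map. -/
noncomputable def tL (n : ℕ) : Para n →ₗ[ℝ] ℝ where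
  toFun := Para.t
  map_add' := Para.t_add
  map_smul' := fun r p => t_smul' r p

instance : FiniteDimensional ℝ (EucP n) :=
  Module.Finite.equiv (WithLp.linearEquiv 2 ℝ (EuclideanSpace ℝ (Fin n) × ℝ)).symm

instance : FiniteDimensional ℝ (Para n) := Module.Finite.equiv (eucEquiv (n:=n)).symm

end Bridge


set_option maxHeartbeats 2000000
set_option synthInstance.maxHeartbeats 1000000

/-- **Corollary 3.4.** A horizontal `m`-Lipschitz graph and a vertical `m`-Lipschitz
graph intersect in a set of `ℋ^m` measure zero. -/
theorem horizontal_vertical_graph_intersection (n m : ℕ) (G G' : Set (Para n))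
    (hG : ∃ L : ℝ, 0 < L ∧ ∃ V ∈ Horiz n m, IsLipGraphOver n m L V G)
    (hG' : ∃ L : ℝ, 0 < L ∧ ∃ V ∈ Vert n m, IsLipGraphOver n m L V G') :
    μH[(m : ℝ)] (G ∩ G') = 0 := by
  classical
  obtain ⟨L, hL, V, hV, -, A, g, hAV, hgperp, hglip, hGeq⟩ := hG
  obtain ⟨L', hL', V', hV', -, A', g', hA'V', hg'perp, hg'lip, hG'eq⟩ := hG'
  obtain ⟨hVfr, hVt⟩ := hV
  obtain ⟨hV'fr, het⟩ := hV'
  set e_t : Para n := Para.ofProd ((0 : EuclideanSpace ℝ (Fin n)), (1:ℝ)) with he_t_def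
  -- W and its dimension
  set W : Submodule ℝ (Para n) := V' ⊓ LinearMap.ker (tL n) with hW_def
  have hWle : W ≤ V' := inf_le_left
  have het_ne : e_t ≠ 0 := by
    intro h
    have : Para.t e_t = 0 := by rw [h]; rfl
    rw [t_et] at this
    norm_num at this
  have hm2 : 2 ≤ m ∧ Module.finrank ℝ W = m - 2 := by
    set f : V' →ₗ[ℝ] ℝ := (tL n).comp V'.subtype with hf_def
    have hfsurj : Function.Surjective f := by
      intro r
      refine ⟨r • ⟨e_t, het⟩, ?_⟩
      have : f ⟨e_t, het⟩ = 1 := rfl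
      rw [_root_.map_smul, this]
      simp
    have hrange : Module.finrank ℝ (LinearMap.range f) = 1 := by
      rw [LinearMap.range_eq_top.mpr hfsurj]
      simp
    have hrk := LinearMap.finrank_range_add_finrank_ker f
    rw [hrange, hV'fr] at hrk
    have hker : LinearMap.ker f = Submodule.comap V'.subtype W := by
      rw [hf_def, LinearMap.ker_comp, hW_def, Submodule.comap_inf]
      rw [Submodule.comap_subtype_self]
      simp
    have hkerfr : Module.finrank ℝ (LinearMap.ker f) = Module.finrank ℝ W := by
      rw [hker]
      exact (Submodule.comapSubtypeEquivOfLe hWle).finrank_eq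
    constructor
    · omega
    · omega
  obtain ⟨hm2, hWfr⟩ := hm2
  set w : ℕ := m - 2 with hw_def
  have hwm : w + 2 = m := by omega
  -- mapped subspaces in Euclidean space
  set Vt : Submodule ℝ (EucP n) := Submodule.map (eucEquiv (n:=n)).toLinearMap V with hVt_def
  set Wt : Submodule ℝ (EucP n) := Submodule.map (eucEquiv (n:=n)).toLinearMap W with hWt_def
  have hVtfr : Module.finrank ℝ Vt = m := by
    rw [hVt_def, LinearEquiv.finrank_map_eq]
    exact hVfr
  have hWtfr : Module.finrank ℝ Wt = w := by
    rw [hWt_def, LinearEquiv.finrank_map_eq]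
    omega
  obtain ⟨lV⟩ : Nonempty (Vt ≃ₗ[ℝ] (Fin m → ℝ)) :=
    ⟨LinearEquiv.ofFinrankEq _ _ (by simp [hVtfr])⟩
  obtain ⟨lW⟩ : Nonempty (Wt ≃ₗ[ℝ] (Fin w → ℝ)) :=
    ⟨LinearEquiv.ofFinrankEq _ _ (by simp [hWtfr])⟩
  -- Lipschitz constants for the four linear maps
  obtain ⟨K1, hK1n, hK1⟩ : ∃ K : ℝ, 0 ≤ K ∧ ∀ x : Vt, ‖lV x‖ ≤ K * ‖x‖ :=
    ⟨‖LinearMap.toContinuousLinearMap lV.toLinearMap‖, ContinuousLinearMap.opNorm_nonneg _,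
      fun x => (LinearMap.toContinuousLinearMap lV.toLinearMap).le_opNorm x⟩
  obtain ⟨K2, hK2n, hK2⟩ : ∃ K : ℝ, 0 ≤ K ∧ ∀ ξ : Fin m → ℝ, ‖lV.symm ξ‖ ≤ K * ‖ξ‖ :=
    ⟨‖LinearMap.toContinuousLinearMap lV.symm.toLinearMap‖, ContinuousLinearMap.opNorm_nonneg _,
      fun x => (LinearMap.toContinuousLinearMap lV.symm.toLinearMap).le_opNorm x⟩
  obtain ⟨K3, hK3n, hK3⟩ : ∃ K : ℝ, 0 ≤ K ∧ ∀ x : Wt, ‖lW x‖ ≤ K * ‖x‖ :=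
    ⟨‖LinearMap.toContinuousLinearMap lW.toLinearMap‖, ContinuousLinearMap.opNorm_nonneg _,
      fun x => (LinearMap.toContinuousLinearMap lW.toLinearMap).le_opNorm x⟩
  obtain ⟨K4, hK4n, hK4⟩ : ∃ K : ℝ, 0 ≤ K ∧ ∀ ξ : Fin w → ℝ, ‖lW.symm ξ‖ ≤ K * ‖ξ‖ :=
    ⟨‖LinearMap.toContinuousLinearMap lW.symm.toLinearMap‖, ContinuousLinearMap.opNorm_nonneg _,
      fun x => (LinearMap.toContinuousLinearMap lW.symm.toLinearMap).le_opNorm x⟩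
  -- choice of graph representation on G'
  have hσex : ∀ q ∈ G', ∃ p', p' ∈ A' ∧ p' + g' p' = q := by
    intro q hq
    rw [hG'eq] at hq
    obtain ⟨p', hp', hpq⟩ := hq
    exact ⟨p', hp', hpq⟩
  choose σ hσA hσeq using hσex
  -- maps to/from coordinates
  set fromP : (Fin m → ℝ) → Para n :=
    fun ξ => (eucEquiv (n:=n)).symm ((lV.symm ξ : Vt) : EucP n) with hfromP_def
  set Dv : Set Vt := {vv | (eucEquiv (n:=n)).symm (vv : EucP n) ∈ A ∧
    (eucEquiv (n:=n)).symm (vv : EucP n) + g ((eucEquiv (n:=n)).symm (vv : EucP n)) ∈ G'} with hDv_def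
  set T : Set (Fin m → ℝ) := (fun vv : Vt => lV vv) '' Dv with hT_def
  have hfromPT : ∀ vv : Vt, fromP (lV vv) = (eucEquiv (n:=n)).symm (vv : EucP n) := by
    intro vv
    rw [hfromP_def]
    simp
  -- τ and u functions
  set τt : (Fin m → ℝ) → ℝ := fun ξ => Para.t (g (fromP ξ)) with hτt_def
  set upt : (p : Para n) → (p + g p ∈ G') → Para n :=
    fun p h => σ (p + g p) h - (Para.t (σ (p + g p) h)) • e_t with hupt_def
  have huptW : ∀ (p : Para n) (h : p + g p ∈ G'), upt p h ∈ W := by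
    intro p h
    rw [hupt_def, hW_def]
    refine Submodule.mem_inf.mpr ⟨?_, ?_⟩
    · exact Submodule.sub_mem _ (hA'V' (hσA _ h)) (Submodule.smul_mem _ _ het)
    · rw [LinearMap.mem_ker]
      show Para.t ((σ (p + g p) h) - (Para.t (σ (p + g p) h)) • e_t) = 0
      rw [Para.t_sub, t_smul']
      rw [he_t_def, t_et]
      ring
  set uu : (Fin m → ℝ) → (Fin w → ℝ) := fun ξ =>
    if h : (fromP ξ) + g (fromP ξ) ∈ G' then
      lW (Wt.orthogonalProjectionOnto (eucEquiv (n:=n) (upt (fromP ξ) h)))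
    else 0 with huu_def
  have hupt_eval : ∀ (pp : Para n) (h : pp + g pp ∈ G'),
      upt pp h = σ (pp + g pp) h - (Para.t (σ (pp + g pp) h)) • e_t := fun pp h => rfl
  -- master geometric estimates
  have hmaster : ∀ p, p ∈ A → ∀ q, q ∈ A → ∀ (hpG : p + g p ∈ G') (hqG : q + g q ∈ G'),
      |Para.t (g p) - Para.t (g q)| ≤ L^2 * pnorm (p - q)^2 ∧
      Para.t (upt p hpG - upt q hqG) = 0 ∧
      (upt p hpG - upt q hqG) ∈ W ∧
      ‖Para.x (upt p hpG - upt q hqG)‖ ≤ (1+L) * pnorm (p - q) ∧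
      pnorm (p - q)^2 ≤ (1+L'^2) * ‖Para.x (upt p hpG - upt q hqG)‖^2
        + L'^2 * |Para.t (g p) - Para.t (g q)| ∧
      pnorm ((p + g p) - (q + g q)) ≤ (1+L) * pnorm (p - q) := by
    intro p hp q hq hpG hqG
    have heV : p - q ∈ V := V.sub_mem (hAV hp) (hAV hq)
    have hte : Para.t (p - q) = 0 := hVt _ heV
    have hγperp : g p - g q ∈ perp V :=
      Submodule.sub_mem _ (hgperp p hp) (hgperp q hq)
    have hpe : pnorm (p - q) = ‖Para.x (p - q)‖ := pnorm_eq_of_t_zero _ hte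
    have hdγ : pnorm (g p - g q) ≤ L * pnorm (p - q) := hglip p hp q hq
    have hθeq : Para.t (g p) - Para.t (g q) = Para.t (g p - g q) := (Para.t_sub _ _).symm
    have hE1 : |Para.t (g p) - Para.t (g q)| ≤ L^2 * pnorm (p - q)^2 := by
      rw [hθeq]
      calc |Para.t (g p - g q)| ≤ pnorm (g p - g q)^2 := abs_t_le_pnorm_sq _
        _ ≤ (L * pnorm (p - q))^2 := pow_le_pow_left₀ (pnorm_nonneg' _) hdγ 2
        _ = L^2 * pnorm (p - q)^2 := by ring
    have hPQ : (p + g p) - (q + g q) = (p - q) + (g p - g q) := by abel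
    have ho1' : (inner ℝ (Para.x (p - q)) (Para.x (g p - g q)) : ℝ) = 0 := by
      have h := perp_inner_zero V (g p - g q) hγperp (p - q) heV
      rw [inner_euc, hte, mul_zero, add_zero] at h
      rw [real_inner_comm]
      exact h
    have hx2 : ‖Para.x ((p + g p) - (q + g q))‖^2
        = ‖Para.x (p - q)‖^2 + ‖Para.x (g p - g q)‖^2 := by
      rw [hPQ, Para.x_add, norm_add_sq_real, ho1']
      ring
    -- vertical side
    have hp'A : σ (p + g p) hpG ∈ A' := hσA _ hpG
    have hq'A : σ (q + g q) hqG ∈ A' := hσA _ hqG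
    have hp'eq : σ (p + g p) hpG + g' (σ (p + g p) hpG) = p + g p := hσeq _ hpG
    have hq'eq : σ (q + g q) hqG + g' (σ (q + g q) hqG) = q + g q := hσeq _ hqG
    set p' := σ (p + g p) hpG
    set q' := σ (q + g q) hqG
    have hγ'perp : g' p' - g' q' ∈ perp V' :=
      Submodule.sub_mem _ (hg'perp _ hp'A) (hg'perp _ hq'A)
    have htγ' : Para.t (g' p' - g' q') = 0 := by
      have h := perp_inner_zero V' (g' p' - g' q') hγ'perp e_t het
      rw [inner_euc] at h
      rw [he_t_def, x_et, t_et, inner_zero_right] at h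
      linarith
    have hPQ' : (p + g p) - (q + g q) = (p' - q') + (g' p' - g' q') := by
      rw [← hp'eq, ← hq'eq]
      abel
    have htp'q' : Para.t (p' - q') = Para.t (g p - g q) := by
      have h1 : Para.t ((p + g p) - (q + g q)) = Para.t (p - q) + Para.t (g p - g q) := by
        rw [hPQ, Para.t_add]
      have h2 : Para.t ((p + g p) - (q + g q))
          = Para.t (p' - q') + Para.t (g' p' - g' q') := by
        rw [hPQ', Para.t_add]
      rw [hte] at h1
      rw [htγ'] at h2
      linarith
    have hueq : upt p hpG - upt q hqG = (p' - q') - (Para.t (g p - g q)) • e_t := by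
      rw [hupt_eval p hpG, hupt_eval q hqG, ← htp'q', Para.t_sub, sub_smul]
      abel
    have hxu0 : Para.x (upt p hpG - upt q hqG) = Para.x (p' - q') := by
      rw [hueq, Para.x_sub, x_smul', he_t_def, x_et, smul_zero, sub_zero]
    have htu0 : Para.t (upt p hpG - upt q hqG) = 0 := by
      rw [hueq, Para.t_sub, t_smul', he_t_def, t_et, htp'q']
      ring
    have hu0W : (upt p hpG - upt q hqG) ∈ W := Submodule.sub_mem _ (huptW p hpG) (huptW q hqG)
    have hu0V' : (upt p hpG - upt q hqG) ∈ V' := hWle hu0W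
    have hxPQ' : Para.x ((p + g p) - (q + g q))
        = Para.x (upt p hpG - upt q hqG) + Para.x (g' p' - g' q') := by
      rw [hPQ', Para.x_add, hxu0]
    have ho2 : (inner ℝ (Para.x (upt p hpG - upt q hqG)) (Para.x (g' p' - g' q')) : ℝ) = 0 := by
      have h := perp_inner_zero V' (g' p' - g' q') hγ'perp _ hu0V'
      rw [inner_euc, htγ'] at h
      rw [real_inner_comm]
      linarith
    have hx2' : ‖Para.x ((p + g p) - (q + g q))‖^2
        = ‖Para.x (upt p hpG - upt q hqG)‖^2 + ‖Para.x (g' p' - g' q')‖^2 := by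
      rw [hxPQ', norm_add_sq_real, ho2]
      ring
    have hγ'lip : pnorm (g' p' - g' q') ≤ L' * pnorm (p' - q') := hg'lip _ hp'A _ hq'A
    have hpnp'q' : pnorm (p' - q')^2
        = ‖Para.x (upt p hpG - upt q hqG)‖^2 + |Para.t (g p) - Para.t (g q)| := by
      rw [pnorm_sq, ← hxu0, htp'q', hθeq]
    have hxγ' : ‖Para.x (g' p' - g' q')‖ = pnorm (g' p' - g' q') :=
      (pnorm_eq_of_t_zero _ htγ').symm
    have hE3 : pnorm (p - q)^2 ≤ (1+L'^2) * ‖Para.x (upt p hpG - upt q hqG)‖^2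
        + L'^2 * |Para.t (g p) - Para.t (g q)| := by
      have h1 : pnorm (p - q)^2 ≤ ‖Para.x ((p + g p) - (q + g q))‖^2 := by
        rw [hpe, hx2]
        nlinarith [sq_nonneg ‖Para.x (g p - g q)‖]
      have h2 : ‖Para.x (g' p' - g' q')‖^2
          ≤ L'^2 * (‖Para.x (upt p hpG - upt q hqG)‖^2 + |Para.t (g p) - Para.t (g q)|) := by
        rw [hxγ']
        calc pnorm (g' p' - g' q')^2 ≤ (L' * pnorm (p' - q'))^2 :=
              pow_le_pow_left₀ (pnorm_nonneg' _) hγ'lip 2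
          _ = L'^2 * pnorm (p' - q')^2 := by ring
          _ = L'^2 * (‖Para.x (upt p hpG - upt q hqG)‖^2
              + |Para.t (g p) - Para.t (g q)|) := by rw [hpnp'q']
      rw [hx2'] at h1
      nlinarith [abs_nonneg (Para.t (g p) - Para.t (g q)),
        sq_nonneg ‖Para.x (upt p hpG - upt q hqG)‖]
    have hE2 : ‖Para.x (upt p hpG - upt q hqG)‖ ≤ (1+L) * pnorm (p - q) := by
      have h1 : ‖Para.x (upt p hpG - upt q hqG)‖^2
          ≤ ‖Para.x (p - q)‖^2 + ‖Para.x (g p - g q)‖^2 := by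
        rw [← hx2, hx2']
        nlinarith [sq_nonneg ‖Para.x (g' p' - g' q')‖]
      have h2 : ‖Para.x (g p - g q)‖ ≤ L * pnorm (p - q) :=
        le_trans (norm_x_le_pnorm _) hdγ
      apply my_le_of_sq_le_sq (norm_nonneg _)
        (mul_nonneg (by linarith) (pnorm_nonneg' _))
      have h3 : ‖Para.x (g p - g q)‖^2 ≤ (L * pnorm (p - q))^2 :=
        pow_le_pow_left₀ (norm_nonneg _) h2 2
      rw [← hpe] at h1
      nlinarith [pnorm_nonneg' (p - q), hL.le]
    have hE4 : pnorm ((p + g p) - (q + g q)) ≤ (1+L) * pnorm (p - q) := by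
      rw [hPQ]
      calc pnorm ((p - q) + (g p - g q)) ≤ pnorm (p - q) + pnorm (g p - g q) :=
            Para.pnorm_add_le _ _
        _ ≤ (1+L) * pnorm (p - q) := by nlinarith [pnorm_nonneg' (p - q)]
    exact ⟨hE1, htu0, hu0W, hE2, hE3, hE4⟩
  have huu_eval : ∀ (ξ0 : Fin m → ℝ) (h : fromP ξ0 + g (fromP ξ0) ∈ G'),
      uu ξ0 = lW (Wt.orthogonalProjectionOnto (eucEquiv (n:=n) (upt (fromP ξ0) h))) := by
    intro ξ0 h
    rw [huu_def]
    simp only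
    rw [dif_pos h]
  have hop : ∀ (x : EucP n), x ∈ Wt → ((Wt.orthogonalProjectionOnto x : Wt) : EucP n) = x :=
    fun x hx => Submodule.starProjection_eq_self_iff.mpr hx
  -- key estimates on T
  set cC : ℝ := K1^2*((1+L'^2)*K4^2 + L'^2) with hcC_def
  have hKey : ∀ ξ ∈ T, ∀ ζ ∈ T,
      (|τt ξ - τt ζ| ≤ (L^2*K2^2) * ‖ξ - ζ‖^2) ∧
      (‖uu ξ - uu ζ‖ ≤ (K3*(1+L)*K2) * ‖ξ - ζ‖) ∧
      (‖ξ - ζ‖^2 ≤ cC * ‖uu ξ - uu ζ‖^2 + cC * |τt ξ - τt ζ|) ∧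
      (pnorm ((fromP ξ + g (fromP ξ)) - (fromP ζ + g (fromP ζ)))
        ≤ ((1+L)*K2) * ‖ξ - ζ‖) := by
    rintro ξ ⟨vξ, hvξ, rfl⟩ ζ ⟨vζ, hvζ, rfl⟩
    have hpe' : fromP (lV vξ) = (eucEquiv (n:=n)).symm (vξ : EucP n) := hfromPT vξ
    have hqe' : fromP (lV vζ) = (eucEquiv (n:=n)).symm (vζ : EucP n) := hfromPT vζ
    have hpA : fromP (lV vξ) ∈ A := by rw [hpe']; exact hvξ.1
    have hqA : fromP (lV vζ) ∈ A := by rw [hqe']; exact hvζ.1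
    have hpG : fromP (lV vξ) + g (fromP (lV vξ)) ∈ G' := by rw [hpe']; exact hvξ.2
    have hqG : fromP (lV vζ) + g (fromP (lV vζ)) ∈ G' := by rw [hqe']; exact hvζ.2
    have heucp : eucEquiv (n:=n) (fromP (lV vξ)) = (vξ : EucP n) := by
      rw [hpe']; exact (eucEquiv (n:=n)).apply_symm_apply _
    have heucq : eucEquiv (n:=n) (fromP (lV vζ)) = (vζ : EucP n) := by
      rw [hqe']; exact (eucEquiv (n:=n)).apply_symm_apply _
    have hpV : fromP (lV vξ) ∈ V := by
      obtain ⟨y, hyV, hyeq⟩ := Submodule.mem_map.mp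
        (show (vξ : EucP n) ∈ Submodule.map (eucEquiv (n:=n)).toLinearMap V from vξ.2)
      have : fromP (lV vξ) = y := by
        rw [hpe', ← hyeq]
        exact (eucEquiv (n:=n)).symm_apply_apply y
      rw [this]; exact hyV
    have hqV : fromP (lV vζ) ∈ V := by
      obtain ⟨y, hyV, hyeq⟩ := Submodule.mem_map.mp
        (show (vζ : EucP n) ∈ Submodule.map (eucEquiv (n:=n)).toLinearMap V from vζ.2)
      have : fromP (lV vζ) = y := by
        rw [hqe', ← hyeq]
        exact (eucEquiv (n:=n)).symm_apply_apply y
      rw [this]; exact hyV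
    have htpq0 : Para.t (fromP (lV vξ) - fromP (lV vζ)) = 0 :=
      hVt _ (V.sub_mem hpV hqV)
    have hcoe : ((vξ - vζ : Vt) : EucP n)
        = eucEquiv (n:=n) (fromP (lV vξ) - fromP (lV vζ)) := by
      rw [Submodule.coe_sub, ← heucp, ← heucq, map_sub]
    have hnv : ‖vξ - vζ‖ = pnorm (fromP (lV vξ) - fromP (lV vζ)) := by
      rw [show ‖vξ - vζ‖ = ‖((vξ - vζ : Vt) : EucP n)‖ from rfl, hcoe,
        norm_euc_eq_of_t_zero _ htpq0, pnorm_eq_of_t_zero _ htpq0]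
    have hd1 : pnorm (fromP (lV vξ) - fromP (lV vζ)) ≤ K2 * ‖lV vξ - lV vζ‖ := by
      have hsub : vξ - vζ = lV.symm (lV vξ - lV vζ) := by
        rw [map_sub]; simp
      calc pnorm (fromP (lV vξ) - fromP (lV vζ)) = ‖vξ - vζ‖ := hnv.symm
        _ = ‖lV.symm (lV vξ - lV vζ)‖ := by rw [← hsub]
        _ ≤ K2 * ‖lV vξ - lV vζ‖ := hK2 _
    have hd2 : ‖lV vξ - lV vζ‖ ≤ K1 * pnorm (fromP (lV vξ) - fromP (lV vζ)) := by
      rw [← map_sub]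
      calc ‖lV (vξ - vζ)‖ ≤ K1 * ‖vξ - vζ‖ := hK1 _
        _ = K1 * pnorm (fromP (lV vξ) - fromP (lV vζ)) := by rw [hnv]
    obtain ⟨hE1, htu0, hu0W, hE2, hE3, hE4⟩ :=
      hmaster _ hpA _ hqA hpG hqG
    have hmemp : eucEquiv (n:=n) (upt (fromP (lV vξ)) hpG) ∈ Wt :=
      Submodule.mem_map_of_mem (huptW _ hpG)
    have hmemq : eucEquiv (n:=n) (upt (fromP (lV vζ)) hqG) ∈ Wt :=
      Submodule.mem_map_of_mem (huptW _ hqG)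
    have hd_uu : uu (lV vξ) - uu (lV vζ)
        = lW (Wt.orthogonalProjectionOnto (eucEquiv (n:=n) (upt (fromP (lV vξ)) hpG))
            - Wt.orthogonalProjectionOnto (eucEquiv (n:=n) (upt (fromP (lV vζ)) hqG))) := by
      rw [huu_eval _ hpG, huu_eval _ hqG, ← map_sub]
    have hcoeW : ((Wt.orthogonalProjectionOnto (eucEquiv (n:=n) (upt (fromP (lV vξ)) hpG))
          - Wt.orthogonalProjectionOnto (eucEquiv (n:=n) (upt (fromP (lV vζ)) hqG)) : Wt) : EucP n)
        = eucEquiv (n:=n) (upt (fromP (lV vξ)) hpG - upt (fromP (lV vζ)) hqG) := by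
      rw [Submodule.coe_sub, hop _ hmemp, hop _ hmemq, ← map_sub]
    have hnormW : ‖Wt.orthogonalProjectionOnto (eucEquiv (n:=n) (upt (fromP (lV vξ)) hpG))
          - Wt.orthogonalProjectionOnto (eucEquiv (n:=n) (upt (fromP (lV vζ)) hqG))‖
        = ‖Para.x (upt (fromP (lV vξ)) hpG - upt (fromP (lV vζ)) hqG)‖ := by
      rw [show ‖Wt.orthogonalProjectionOnto (eucEquiv (n:=n) (upt (fromP (lV vξ)) hpG))
          - Wt.orthogonalProjectionOnto (eucEquiv (n:=n) (upt (fromP (lV vζ)) hqG))‖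
        = ‖((Wt.orthogonalProjectionOnto (eucEquiv (n:=n) (upt (fromP (lV vξ)) hpG))
          - Wt.orthogonalProjectionOnto (eucEquiv (n:=n) (upt (fromP (lV vζ)) hqG)) : Wt) : EucP n)‖
        from rfl, hcoeW, norm_euc_eq_of_t_zero _ htu0]
    have hτeq : τt (lV vξ) - τt (lV vζ)
        = Para.t (g (fromP (lV vξ))) - Para.t (g (fromP (lV vζ))) := rfl
    have hpn_nonneg := pnorm_nonneg' (fromP (lV vξ) - fromP (lV vζ))
    have hnorm_nonneg : (0:ℝ) ≤ ‖lV vξ - lV vζ‖ := norm_nonneg _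
    have hd1sq : pnorm (fromP (lV vξ) - fromP (lV vζ))^2 ≤ K2^2 * ‖lV vξ - lV vζ‖^2 := by
      have := pow_le_pow_left₀ hpn_nonneg hd1 2
      calc pnorm (fromP (lV vξ) - fromP (lV vζ))^2 ≤ (K2 * ‖lV vξ - lV vζ‖)^2 := this
        _ = K2^2 * ‖lV vξ - lV vζ‖^2 := by ring
    refine ⟨?_, ?_, ?_, ?_⟩
    · rw [hτeq]
      calc |Para.t (g (fromP (lV vξ))) - Para.t (g (fromP (lV vζ)))|
          ≤ L^2 * pnorm (fromP (lV vξ) - fromP (lV vζ))^2 := hE1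
        _ ≤ L^2 * (K2^2 * ‖lV vξ - lV vζ‖^2) :=
            mul_le_mul_of_nonneg_left hd1sq (by positivity)
        _ = (L^2*K2^2) * ‖lV vξ - lV vζ‖^2 := by ring
    · rw [hd_uu]
      calc ‖lW _‖ ≤ K3 * ‖Wt.orthogonalProjectionOnto (eucEquiv (n:=n) (upt (fromP (lV vξ)) hpG))
            - Wt.orthogonalProjectionOnto (eucEquiv (n:=n) (upt (fromP (lV vζ)) hqG))‖ := hK3 _
        _ = K3 * ‖Para.x (upt (fromP (lV vξ)) hpG - upt (fromP (lV vζ)) hqG)‖ := by rw [hnormW]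
        _ ≤ K3 * ((1+L) * pnorm (fromP (lV vξ) - fromP (lV vζ))) :=
            mul_le_mul_of_nonneg_left hE2 hK3n
        _ ≤ K3 * ((1+L) * (K2 * ‖lV vξ - lV vζ‖)) := by
            apply mul_le_mul_of_nonneg_left _ hK3n
            exact mul_le_mul_of_nonneg_left hd1 (by linarith)
        _ = (K3*(1+L)*K2) * ‖lV vξ - lV vζ‖ := by ring
    · have hlow : ‖Para.x (upt (fromP (lV vξ)) hpG - upt (fromP (lV vζ)) hqG)‖
          ≤ K4 * ‖uu (lV vξ) - uu (lV vζ)‖ := by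
        have hrec : (Wt.orthogonalProjectionOnto (eucEquiv (n:=n) (upt (fromP (lV vξ)) hpG))
              - Wt.orthogonalProjectionOnto (eucEquiv (n:=n) (upt (fromP (lV vζ)) hqG)))
            = lW.symm (uu (lV vξ) - uu (lV vζ)) := by
          rw [hd_uu]
          simp
        calc ‖Para.x (upt (fromP (lV vξ)) hpG - upt (fromP (lV vζ)) hqG)‖
            = ‖Wt.orthogonalProjectionOnto (eucEquiv (n:=n) (upt (fromP (lV vξ)) hpG))
              - Wt.orthogonalProjectionOnto (eucEquiv (n:=n) (upt (fromP (lV vζ)) hqG))‖ := hnormW.symm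
          _ = ‖lW.symm (uu (lV vξ) - uu (lV vζ))‖ := by rw [hrec]
          _ ≤ K4 * ‖uu (lV vξ) - uu (lV vζ)‖ := hK4 _
      have hlowsq : ‖Para.x (upt (fromP (lV vξ)) hpG - upt (fromP (lV vζ)) hqG)‖^2
          ≤ K4^2 * ‖uu (lV vξ) - uu (lV vζ)‖^2 := by
        have := pow_le_pow_left₀ (norm_nonneg _) hlow 2
        calc ‖Para.x (upt (fromP (lV vξ)) hpG - upt (fromP (lV vζ)) hqG)‖^2
            ≤ (K4 * ‖uu (lV vξ) - uu (lV vζ)‖)^2 := this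
          _ = K4^2 * ‖uu (lV vξ) - uu (lV vζ)‖^2 := by ring
      have hd2sq : ‖lV vξ - lV vζ‖^2 ≤ K1^2 * pnorm (fromP (lV vξ) - fromP (lV vζ))^2 := by
        have := pow_le_pow_left₀ hnorm_nonneg hd2 2
        calc ‖lV vξ - lV vζ‖^2 ≤ (K1 * pnorm (fromP (lV vξ) - fromP (lV vζ)))^2 := this
          _ = K1^2 * pnorm (fromP (lV vξ) - fromP (lV vζ))^2 := by ring
      rw [hτeq, hcC_def]
      have habs : (0:ℝ) ≤ |Para.t (g (fromP (lV vξ))) - Para.t (g (fromP (lV vζ)))| := abs_nonneg _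
      have huusq : (0:ℝ) ≤ ‖uu (lV vξ) - uu (lV vζ)‖^2 := sq_nonneg _
      have t1 : (0:ℝ) ≤ K1^2*L'^2 * ‖uu (lV vξ) - uu (lV vζ)‖^2 := by positivity
      have t2 : (0:ℝ) ≤ (K1^2*((1+L'^2)*K4^2))
          * |Para.t (g (fromP (lV vξ))) - Para.t (g (fromP (lV vζ)))| := by positivity
      calc ‖lV vξ - lV vζ‖^2
          ≤ K1^2 * pnorm (fromP (lV vξ) - fromP (lV vζ))^2 := hd2sq
        _ ≤ K1^2 * ((1+L'^2) * ‖Para.x (upt (fromP (lV vξ)) hpG - upt (fromP (lV vζ)) hqG)‖^2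
            + L'^2 * |Para.t (g (fromP (lV vξ))) - Para.t (g (fromP (lV vζ)))|) :=
            mul_le_mul_of_nonneg_left hE3 (sq_nonneg K1)
        _ ≤ K1^2 * ((1+L'^2) * (K4^2 * ‖uu (lV vξ) - uu (lV vζ)‖^2)
            + L'^2 * |Para.t (g (fromP (lV vξ))) - Para.t (g (fromP (lV vζ)))|) := by
            apply mul_le_mul_of_nonneg_left _ (sq_nonneg K1)
            apply add_le_add_left
            exact mul_le_mul_of_nonneg_left hlowsq (by positivity)
        _ ≤ K1^2*((1+L'^2)*K4^2 + L'^2) * ‖uu (lV vξ) - uu (lV vζ)‖^2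
            + K1^2*((1+L'^2)*K4^2 + L'^2)
              * |Para.t (g (fromP (lV vξ))) - Para.t (g (fromP (lV vζ)))| := by
            nlinarith [t1, t2]
    · calc pnorm ((fromP (lV vξ) + g (fromP (lV vξ))) - (fromP (lV vζ) + g (fromP (lV vζ))))
          ≤ (1+L) * pnorm (fromP (lV vξ) - fromP (lV vζ)) := hE4
        _ ≤ (1+L) * (K2 * ‖lV vξ - lV vζ‖) :=
            mul_le_mul_of_nonneg_left hd1 (by linarith)
        _ = ((1+L)*K2) * ‖lV vξ - lV vζ‖ := by ring
  have h1c : ∀ ξ ∈ T, ∀ ζ ∈ T, |τt ξ - τt ζ| ≤ (L^2*K2^2) * ‖ξ - ζ‖^2 :=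
    fun ξ hξ ζ hζ => ((hKey ξ hξ ζ hζ).1)
  have h2c : ∀ ξ ∈ T, ∀ ζ ∈ T, ‖uu ξ - uu ζ‖ ≤ (K3*(1+L)*K2) * ‖ξ - ζ‖ :=
    fun ξ hξ ζ hζ => ((hKey ξ hξ ζ hζ).2.1)
  have h3c : ∀ ξ ∈ T, ∀ ζ ∈ T, ‖ξ - ζ‖^2 ≤ cC * ‖uu ξ - uu ζ‖^2 + cC * |τt ξ - τt ζ| :=
    fun ξ hξ ζ hζ => ((hKey ξ hξ ζ hζ).2.2.1)
  have hT0 : volume T = 0 :=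
    my_core hwm T τt uu (L^2*K2^2) (K3*(1+L)*K2) cC (by positivity) (by positivity)
      (by rw [hcC_def]; positivity) h1c h2c h3c
  -- the graph map from coordinates
  set ψ : (Fin m → ℝ) → Para n := fun ξ => fromP ξ + g (fromP ξ) with hψ_def
  have hST : G ∩ G' ⊆ ψ '' T := by
    rintro P0 ⟨hPG, hPG'⟩
    rw [hGeq] at hPG
    obtain ⟨p, hpA, rfl⟩ := hPG
    have hpV : p ∈ V := hAV hpA
    have hmem : eucEquiv (n:=n) p ∈ Vt := Submodule.mem_map_of_mem hpV
    have hback : (eucEquiv (n:=n)).symm ((⟨eucEquiv (n:=n) p, hmem⟩ : Vt) : EucP n) = p :=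
      (eucEquiv (n:=n)).symm_apply_apply p
    refine ⟨lV ⟨eucEquiv (n:=n) p, hmem⟩, ⟨⟨eucEquiv (n:=n) p, hmem⟩, ?_, rfl⟩, ?_⟩
    · show _ ∈ Dv
      rw [hDv_def]
      simp only [Set.mem_setOf_eq]
      rw [hback]
      exact ⟨hpA, hPG'⟩
    · show fromP (lV ⟨eucEquiv (n:=n) p, hmem⟩)
          + g (fromP (lV ⟨eucEquiv (n:=n) p, hmem⟩)) = p + g p
      rw [hfromPT, hback]
  have hψlip : LipschitzOnWith (Real.toNNReal ((1+L)*K2)) ψ T := by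
    rw [lipschitzOnWith_iff_dist_le_mul]
    intro ξ hξ ζ hζ
    have h4 := (hKey ξ hξ ζ hζ).2.2.2
    have hcoe : ((Real.toNNReal ((1+L)*K2)) : ℝ) = (1+L)*K2 :=
      Real.coe_toNNReal _ (by positivity)
    rw [hcoe]
    calc dist (ψ ξ) (ψ ζ) = pnorm (ψ ξ - ψ ζ) := Para.dist_def _ _
      _ = pnorm ((fromP ξ + g (fromP ξ)) - (fromP ζ + g (fromP ζ))) := rfl
      _ ≤ ((1+L)*K2) * ‖ξ - ζ‖ := h4
      _ = ((1+L)*K2) * dist ξ ζ := by rw [dist_eq_norm]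
  have hμT : μH[(m:ℝ)] (ψ '' T)
      ≤ (Real.toNNReal ((1+L)*K2) : ℝ≥0∞)^(m:ℝ) * μH[(m:ℝ)] T :=
    hψlip.hausdorffMeasure_image_le (by positivity)
  have hHpi : (μH[(m:ℝ)] : Measure (Fin m → ℝ)) = volume := by
    have h := MeasureTheory.hausdorffMeasure_pi_real (ι := Fin m)
    simpa using h
  have hfin : μH[(m:ℝ)] (G ∩ G') ≤ 0 := by
    calc μH[(m:ℝ)] (G ∩ G') ≤ μH[(m:ℝ)] (ψ '' T) := measure_mono hST
      _ ≤ (Real.toNNReal ((1+L)*K2) : ℝ≥0∞)^(m:ℝ) * μH[(m:ℝ)] T := hμT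
      _ = (Real.toNNReal ((1+L)*K2) : ℝ≥0∞)^(m:ℝ) * volume T := by rw [hHpi]
      _ = 0 := by rw [hT0, mul_zero]
  exact le_antisymm hfin zero_le

end
end
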